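/- arXiv:1608.01412 — 4 statements merged into one kernel-verified Lean document; each statement's English description precedes it below -/
import Mathlib

section
/- For every positive integer n, ζ({2}^n) = π^{2n} / (2n+1)!. -/
open Real Finset

/-- Multiple zeta value with real exponents `a i`, summed over
`1 ≤ k₁ < k₂ < ⋯ < k_r`. -/
noncomputable def mzv {r : ℕ} (a : Fin r → ℝ) : ℝ :=
  ∑' f : {f : Fin r → ℕ // (∀ i, 1 ≤ f i) ∧ StrictMono f},
    ∏ i, ((f.1 i : ℝ)) ^ (-(a i))

/-- Multiple zeta star value with real exponents `a i`, summed over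
`1 ≤ k₁ ≤ k₂ ≤ ⋯ ≤ k_r`. -/
noncomputable def mzsv {r : ℕ} (a : Fin r → ℝ) : ℝ :=
  ∑' f : {f : Fin r → ℕ // (∀ i, 1 ≤ f i) ∧ Monotone f},
    ∏ i, ((f.1 i : ℝ)) ^ (-(a i))

namespace ZetaTwoAux

/-- weight `1/k²`. -/
noncomputable def ww (k : ℕ) : ℝ := ((k : ℝ) ^ 2)⁻¹

lemma ww_nonneg (k : ℕ) : 0 ≤ ww k := by unfold ww; positivity

lemma summable_ww : Summable ww := Real.summable_nat_pow_inv.2 one_lt_two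

/-- `B = ζ(2)` (plus a harmless `k = 0` term, which is zero). -/
noncomputable def BB : ℝ := ∑' k, ww k

lemma BB_nonneg : 0 ≤ BB := tsum_nonneg ww_nonneg

/-- product of weights over a finite set. -/
noncomputable def W (t : Finset ℕ) : ℝ := ∏ k ∈ t, ww k

lemma W_nonneg (t : Finset ℕ) : 0 ≤ W t := Finset.prod_nonneg fun k _ => ww_nonneg k

/-- predicate: a finset of card `n` all of whose elements are `≥ 1`. -/
def P (n : ℕ) (t : Finset ℕ) : Prop := t.card = n ∧ ∀ k ∈ t, 1 ≤ k

instance (n : ℕ) : DecidablePred (P n) := fun t =>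
  decidable_of_iff (t.card = n ∧ ∀ k ∈ t, 1 ≤ k) Iff.rfl

/-- `E n = ζ({2}^n)` as a sum over finsets. -/
noncomputable def E (n : ℕ) : ℝ := ∑' t : {t : Finset ℕ // P n t}, W t.1

lemma image_orderEmbOfFin (t : Finset ℕ) {n : ℕ} (h : t.card = n) :
    Finset.image (t.orderEmbOfFin h) Finset.univ = t := by
  rw [← Finset.coe_inj, Finset.coe_image, Finset.coe_univ, Set.image_univ,
    Finset.range_orderEmbOfFin]

lemma sum_powersetCard_le (n : ℕ) (s : Finset ℕ) :
    ∑ t ∈ s.powersetCard n, W t ≤ (∑ k ∈ s, ww k) ^ n := by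
  classical
  rw [Finset.sum_pow']
  set F : Finset ℕ → (Fin n → ℕ) := fun t =>
    if h : t.card = n then (t.orderEmbOfFin h : Fin n → ℕ) else fun _ => 0 with hF
  have himg : ∀ t : Finset ℕ, t.card = n → Finset.image (F t) Finset.univ = t := by
    intro t h
    simp only [hF, dif_pos h]
    exact image_orderEmbOfFin t h
  have hW : ∀ t ∈ s.powersetCard n, W t = ∏ i, ww (F t i) := by
    intro t ht
    obtain ⟨hsub, hcard⟩ := Finset.mem_powersetCard.1 ht
    conv_lhs => rw [W, ← himg t hcard]
    rw [Finset.prod_image]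
    intro x _ y _ hxy
    have hinj : Function.Injective (F t) := by
      simp only [hF, dif_pos hcard]
      exact (t.orderEmbOfFin hcard).injective
    exact hinj hxy
  rw [Finset.sum_congr rfl hW]
  rw [← Finset.sum_image (g := F) (f := fun q => ∏ i, ww (q i)) ?hinj]
  case hinj =>
    intro x hx y hy hxy
    have hx' := (Finset.mem_powersetCard.1 hx).2
    have hy' := (Finset.mem_powersetCard.1 hy).2
    rw [← himg x hx', ← himg y hy', hxy]
  refine Finset.sum_le_sum_of_subset_of_nonneg ?_ ?_
  · intro q hq
    obtain ⟨t, ht, rfl⟩ := Finset.mem_image.1 hq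
    obtain ⟨hsub, hcard⟩ := Finset.mem_powersetCard.1 ht
    rw [Fintype.mem_piFinset]
    intro i
    apply hsub
    have : F t i ∈ Finset.image (F t) Finset.univ := Finset.mem_image_of_mem _ (Finset.mem_univ i)
    rwa [himg t hcard] at this
  · intro q _ _
    exact Finset.prod_nonneg fun i _ => ww_nonneg _

/-- finsets of the subtype coming from `powersetCard n (Icc 1 N)`. -/
noncomputable def G (n N : ℕ) : Finset {t : Finset ℕ // P n t} :=
  ((Finset.Icc 1 N).powersetCard n).subtype (P n)

/-- partial elementary symmetric sums. -/
noncomputable def eE (n N : ℕ) : ℝ := ∑ t ∈ (Finset.Icc 1 N).powersetCard n, W t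

lemma sum_G (n N : ℕ) : ∑ t ∈ G n N, W t.1 = eE n N := by
  rw [G, eE, Finset.sum_subtype_eq_sum_filter, Finset.filter_true_of_mem]
  intro t ht
  obtain ⟨hsub, hcard⟩ := Finset.mem_powersetCard.1 ht
  exact ⟨hcard, fun k hk => (Finset.mem_Icc.1 (hsub hk)).1⟩

lemma eE_nonneg (n N : ℕ) : 0 ≤ eE n N :=
  Finset.sum_nonneg fun t _ => W_nonneg t

lemma eE_le (n N : ℕ) : eE n N ≤ BB ^ n := by
  refine le_trans (sum_powersetCard_le n _) ?_
  refine pow_le_pow_left₀ (Finset.sum_nonneg fun k _ => ww_nonneg k) ?_ n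
  exact Summable.sum_le_tsum _ (fun k _ => ww_nonneg k) summable_ww

lemma finsum_le (n : ℕ) (u : Finset {t : Finset ℕ // P n t}) :
    ∑ t ∈ u, W t.1 ≤ BB ^ n := by
  classical
  set N := u.sup fun t => t.1.sup id with hN
  have hsub : u ⊆ G n N := by
    intro t ht
    rw [G, Finset.mem_subtype, Finset.mem_powersetCard]
    refine ⟨fun k hk => ?_, t.2.1⟩
    rw [Finset.mem_Icc]
    refine ⟨t.2.2 k hk, ?_⟩
    calc k = id k := rfl
      _ ≤ t.1.sup id := Finset.le_sup hk
      _ ≤ N := Finset.le_sup (f := fun t : {t : Finset ℕ // P n t} => t.1.sup id) ht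
  calc ∑ t ∈ u, W t.1 ≤ ∑ t ∈ G n N, W t.1 :=
        Finset.sum_le_sum_of_subset_of_nonneg hsub fun t _ _ => W_nonneg t.1
    _ = eE n N := sum_G n N
    _ ≤ BB ^ n := eE_le n N

lemma summable_W (n : ℕ) : Summable (fun t : {t : Finset ℕ // P n t} => W t.1) :=
  summable_of_sum_le (fun t => W_nonneg t.1) (finsum_le n)

lemma E_nonneg (n : ℕ) : 0 ≤ E n := tsum_nonneg fun t => W_nonneg t.1

lemma E_le (n : ℕ) : E n ≤ BB ^ n :=
  Summable.tsum_le_of_sum_le (summable_W n) (finsum_le n)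

lemma tendsto_eE (n : ℕ) :
    Filter.Tendsto (fun N => eE n N) Filter.atTop (nhds (E n)) := by
  have h : HasSum (fun t : {t : Finset ℕ // P n t} => W t.1) (E n) := (summable_W n).hasSum
  have hG : Filter.Tendsto (fun N => G n N) Filter.atTop Filter.atTop := by
    refine Filter.tendsto_atTop_finset_of_monotone ?_ ?_
    · intro a b hab
      exact Finset.subtype_mono (Finset.powersetCard_mono (Finset.Icc_subset_Icc le_rfl hab))
    · intro t
      refine ⟨t.1.sup id, ?_⟩
      rw [G, Finset.mem_subtype, Finset.mem_powersetCard]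
      exact ⟨fun k hk => Finset.mem_Icc.2 ⟨t.2.2 k hk, Finset.le_sup (f := id) hk⟩, t.2.1⟩
  have := h.comp hG
  refine this.congr fun N => ?_
  exact sum_G n N

lemma prod_eq (x : ℝ) (N : ℕ) :
    ∏ k ∈ Finset.Icc 1 N, (1 - x ^ 2 * ww k) =
      ∑ j ∈ Finset.range (N + 1), (-x ^ 2) ^ j * eE j N := by
  classical
  have h1 : ∀ k ∈ Finset.Icc 1 N, (1 : ℝ) - x ^ 2 * ww k = (-x ^ 2) * ww k + 1 := by
    intro k _; ring
  rw [Finset.prod_congr rfl h1, Finset.prod_add]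
  simp only [Finset.prod_const_one, mul_one]
  rw [Finset.sum_powerset]
  have hcard : (Finset.Icc 1 N).card = N := by rw [Nat.card_Icc]; omega
  rw [hcard]
  refine Finset.sum_congr rfl fun j _ => ?_
  rw [eE, Finset.mul_sum]
  refine Finset.sum_congr rfl fun t ht => ?_
  have hc : t.card = j := (Finset.mem_powersetCard.1 ht).2
  rw [W, Finset.prod_mul_distrib, Finset.prod_const, hc]

lemma tendsto_prod_sin {x : ℝ} (hx : x ≠ 0) :
    Filter.Tendsto (fun N => ∏ k ∈ Finset.Icc 1 N, (1 - x ^ 2 * ww k)) Filter.atTop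
      (nhds (Real.sin (π * x) / (π * x))) := by
  have hπx : π * x ≠ 0 := mul_ne_zero (ne_of_gt Real.pi_pos) hx
  have h2 := (Real.tendsto_euler_sin_prod x).const_mul (π * x)⁻¹
  have key : ∀ N : ℕ, (π * x)⁻¹ * (π * x * ∏ j ∈ Finset.range N, ((1 : ℝ) - x ^ 2 / ((j : ℝ) + 1) ^ 2)) =
      ∏ k ∈ Finset.Icc 1 N, (1 - x ^ 2 * ww k) := by
    intro N
    rw [inv_mul_cancel_left₀ hπx]
    rw [show Finset.Icc 1 N = Finset.Ico 1 (N + 1) from (Finset.Ico_add_one_right_eq_Icc 1 N).symm]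
    rw [Finset.prod_Ico_eq_prod_range]
    refine Finset.prod_congr (by norm_num) fun i _ => ?_
    unfold ww
    push_cast
    rw [div_eq_mul_inv]
    ring
  have h3 := h2.congr key
  rwa [div_eq_inv_mul]

lemma tendsto_partial (x : ℝ) (hq : x ^ 2 * BB < 1) :
    Filter.Tendsto (fun N => ∑ j ∈ Finset.range (N + 1), (-x ^ 2) ^ j * eE j N)
      Filter.atTop (nhds (∑' j, (-x ^ 2) ^ j * E j)) := by
  have hb : Summable (fun j : ℕ => (x ^ 2 * BB) ^ j) :=
    summable_geometric_of_lt_one (mul_nonneg (sq_nonneg x) BB_nonneg) hq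
  have h := tendsto_tsum_of_dominated_convergence
    (f := fun (N : ℕ) (j : ℕ) => (-x ^ 2) ^ j * eE j N)
    (g := fun j => (-x ^ 2) ^ j * E j)
    (bound := fun j => (x ^ 2 * BB) ^ j) hb
    (fun j => (tendsto_eE j).const_mul _) ?_
  · refine h.congr fun N => ?_
    refine tsum_eq_sum fun j hj => ?_
    have hNj : N < j := by
      rw [Finset.mem_range] at hj; omega
    have : (Finset.Icc 1 N).powersetCard j = ∅ := by
      rw [Finset.powersetCard_eq_empty, Nat.card_Icc]; omega
    simp only [eE, this, Finset.sum_empty, mul_zero]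
  · filter_upwards with N
    intro j
    calc ‖(-x ^ 2) ^ j * eE j N‖ = (x ^ 2) ^ j * eE j N := by
          rw [Real.norm_eq_abs, abs_mul, abs_pow, abs_neg,
            abs_of_nonneg (sq_nonneg x), abs_of_nonneg (eE_nonneg j N)]
      _ ≤ (x ^ 2) ^ j * BB ^ j := mul_le_mul_of_nonneg_left (eE_le j N) (by positivity)
      _ = (x ^ 2 * BB) ^ j := (mul_pow _ _ _).symm

lemma sum_E_eq {x : ℝ} (hx : 0 < x) (hq : x ^ 2 * BB < 1) :
    ∑' j, (-x ^ 2) ^ j * E j = Real.sin (π * x) / (π * x) := by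
  have h1 := tendsto_partial x hq
  have h2 := (tendsto_prod_sin hx.ne').congr (fun N => prod_eq x N)
  exact tendsto_nhds_unique h1 h2

/-- target coefficients. -/
noncomputable def cc (j : ℕ) : ℝ := π ^ (2 * j) / ((2 * j + 1).factorial : ℝ)

lemma hasSum_cc {x : ℝ} (hx : 0 < x) :
    HasSum (fun j => (-x ^ 2) ^ j * cc j) (Real.sin (π * x) / (π * x)) := by
  have hπx : π * x ≠ 0 := mul_ne_zero (ne_of_gt Real.pi_pos) hx.ne'
  have h := (Real.hasSum_sin (π * x)).div_const (π * x)
  have key : (fun j : ℕ => (-x ^ 2) ^ j * cc j) =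
      fun j : ℕ => (-1) ^ j * (π * x) ^ (2 * j + 1) / ((2 * j + 1).factorial : ℝ) / (π * x) := by
    funext j
    have hfac : ((2 * j + 1).factorial : ℝ) ≠ 0 := Nat.cast_ne_zero.2 (2 * j + 1).factorial_ne_zero
    rw [cc]
    field_simp
    ring
  rw [key]
  exact h

lemma cc_nonneg (j : ℕ) : 0 ≤ cc j := by
  unfold cc; positivity

lemma cc_le (j : ℕ) : cc j ≤ (π ^ 2) ^ j := by
  unfold cc
  rw [← pow_mul]
  refine div_le_self (by positivity) ?_
  exact_mod_cast Nat.one_le_iff_ne_zero.2 (2 * j + 1).factorial_ne_zero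

/-- coefficient extraction: a power series with exponentially bounded coefficients
vanishing on `(0, ρ)` has all coefficients zero. -/
lemma coef_zero {d : ℕ → ℝ} {C M ρ : ℝ} (hC : 0 ≤ C) (hM : 0 < M) (hρ : 0 < ρ)
    (hd : ∀ j, |d j| ≤ C * M ^ j)
    (h0 : ∀ y ∈ Set.Ioo (0 : ℝ) ρ, ∑' j, d j * y ^ j = 0) :
    ∀ j, d j = 0 := by
  intro j
  induction j using Nat.strong_induction_on with
  | _ n ih =>
  have key : ∀ y : ℝ, 0 < y → y < ρ → M * y ≤ 1 / 2 → |d n| ≤ 2 * C * M ^ (n + 1) * y := by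
    intro y hy hyρ hMy
    have hy1 : M * y < 1 := lt_of_le_of_lt hMy (by norm_num)
    have hMy0 : 0 ≤ M * y := by positivity
    have hsum : Summable (fun j => d j * y ^ j) := by
      refine Summable.of_norm_bounded
        ((summable_geometric_of_lt_one hMy0 hy1).mul_left C) fun j => ?_
      calc ‖d j * y ^ j‖ = |d j| * y ^ j := by
            rw [Real.norm_eq_abs, abs_mul, abs_pow, abs_of_pos hy]
        _ ≤ C * M ^ j * y ^ j := mul_le_mul_of_nonneg_right (hd j) (pow_nonneg hy.le j)
        _ = C * (M * y) ^ j := by rw [mul_pow]; ring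
    have hzero := h0 y ⟨hy, hyρ⟩
    have hdrop := Summable.sum_add_tsum_nat_add (f := fun j => d j * y ^ j) n hsum
    have hfirst : ∑ i ∈ Finset.range n, d i * y ^ i = 0 :=
      Finset.sum_eq_zero fun i hi => by rw [ih i (Finset.mem_range.1 hi), zero_mul]
    have htail : ∑' i, d (i + n) * y ^ (i + n) = 0 := by
      rw [hfirst, zero_add, hzero] at hdrop; exact hdrop
    have hfac : ∑' i, d (i + n) * y ^ (i + n) = (∑' i, d (i + n) * y ^ i) * y ^ n := by
      rw [← tsum_mul_right]
      exact tsum_congr fun i => by rw [pow_add]; ring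
    have hyn : y ^ n ≠ 0 := pow_ne_zero n hy.ne'
    have hg : ∑' i, d (i + n) * y ^ i = 0 := by
      rw [hfac] at htail
      exact (mul_eq_zero.1 htail).resolve_right hyn
    have hsum2 : Summable (fun i => d (i + n) * y ^ i) := by
      refine Summable.of_norm_bounded (g := fun i => C * M ^ n * (M * y) ^ i)
        ((summable_geometric_of_lt_one hMy0 hy1).mul_left _) fun i => ?_
      calc ‖d (i + n) * y ^ i‖ = |d (i + n)| * y ^ i := by
            rw [Real.norm_eq_abs, abs_mul, abs_pow, abs_of_pos hy]
        _ ≤ C * M ^ (i + n) * y ^ i :=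
            mul_le_mul_of_nonneg_right (hd _) (pow_nonneg hy.le i)
        _ = C * M ^ n * (M * y) ^ i := by rw [pow_add, mul_pow]; ring
    have hsplit := Summable.sum_add_tsum_nat_add (f := fun i => d (i + n) * y ^ i) 1 hsum2
    rw [hg] at hsplit
    have hone : ∑ i ∈ Finset.range 1, d (i + n) * y ^ i = d n := by
      simp
    rw [hone] at hsplit
    have hdn : d n = -∑' i, d (i + 1 + n) * y ^ (i + 1) :=
      eq_neg_of_add_eq_zero_left hsplit
    have hb : ∀ i, ‖d (i + 1 + n) * y ^ (i + 1)‖ ≤ C * M ^ (n + 1) * y * (M * y) ^ i := by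
      intro i
      calc ‖d (i + 1 + n) * y ^ (i + 1)‖ = |d (i + 1 + n)| * y ^ (i + 1) := by
            rw [Real.norm_eq_abs, abs_mul, abs_pow, abs_of_pos hy]
        _ ≤ C * M ^ (i + 1 + n) * y ^ (i + 1) :=
            mul_le_mul_of_nonneg_right (hd _) (pow_nonneg hy.le _)
        _ = C * M ^ (n + 1) * y * (M * y) ^ i := by
            rw [show i + 1 + n = (n + 1) + i by omega, pow_add, pow_succ, mul_pow]
            ring
    have hgeo : Summable (fun i : ℕ => C * M ^ (n + 1) * y * (M * y) ^ i) :=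
      (summable_geometric_of_lt_one hMy0 hy1).mul_left _
    have hsn : Summable (fun i => ‖d (i + 1 + n) * y ^ (i + 1)‖) :=
      Summable.of_nonneg_of_le (fun i => norm_nonneg _) hb hgeo
    have hbound : |d n| ≤ C * M ^ (n + 1) * y * (1 - M * y)⁻¹ := by
      rw [hdn, abs_neg]
      calc |∑' i, d (i + 1 + n) * y ^ (i + 1)| ≤ ∑' i, ‖d (i + 1 + n) * y ^ (i + 1)‖ :=
            norm_tsum_le_tsum_norm hsn
        _ ≤ ∑' i : ℕ, C * M ^ (n + 1) * y * (M * y) ^ i := Summable.tsum_le_tsum hb hsn hgeo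
        _ = C * M ^ (n + 1) * y * (1 - M * y)⁻¹ := by
            rw [tsum_mul_left, tsum_geometric_of_lt_one hMy0 hy1]
    have hinv : (1 - M * y)⁻¹ ≤ 2 := by
      rw [show (2 : ℝ) = (1 / 2)⁻¹ by norm_num]
      exact inv_anti₀ (by norm_num) (by linarith)
    calc |d n| ≤ C * M ^ (n + 1) * y * (1 - M * y)⁻¹ := hbound
      _ ≤ C * M ^ (n + 1) * y * 2 :=
          mul_le_mul_of_nonneg_left hinv (by positivity)
      _ = 2 * C * M ^ (n + 1) * y := by ring
  have habs : ∀ ε : ℝ, 0 < ε → |d n| ≤ 0 + ε := by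
    intro ε hε
    set K := 2 * C * M ^ (n + 1) + 1 with hK
    have hK0 : 0 < K := by positivity
    set y := min (ρ / 2) (min (1 / (2 * M)) (ε / K)) with hy
    have hy0 : 0 < y := by
      refine lt_min (by linarith) (lt_min (by positivity) (by positivity))
    have hyρ : y < ρ := lt_of_le_of_lt (min_le_left _ _) (by linarith)
    have hyM : M * y ≤ 1 / 2 := by
      have : y ≤ 1 / (2 * M) := le_trans (min_le_right _ _) (min_le_left _ _)
      calc M * y ≤ M * (1 / (2 * M)) := mul_le_mul_of_nonneg_left this hM.le
        _ = 1 / 2 := by field_simp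
    have hyε : y ≤ ε / K := le_trans (min_le_right _ _) (min_le_right _ _)
    have h1 := key y hy0 hyρ hyM
    calc |d n| ≤ 2 * C * M ^ (n + 1) * y := h1
      _ ≤ K * (ε / K) := by
          refine mul_le_mul ?_ hyε hy0.le hK0.le
          rw [hK]; linarith
      _ = ε := by field_simp
      _ = 0 + ε := by ring
  have h0' : |d n| ≤ 0 := le_of_forall_pos_le_add habs
  exact abs_nonpos_iff.1 h0'

/-- the equivalence between strictly monotone tuples and finsets. -/
noncomputable def eqv (n : ℕ) :
    {f : Fin n → ℕ // (∀ i, 1 ≤ f i) ∧ StrictMono f} ≃ {t : Finset ℕ // P n t} where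
  toFun f := ⟨Finset.image f.1 Finset.univ,
    by rw [Finset.card_image_of_injective _ f.2.2.injective, Finset.card_univ, Fintype.card_fin],
    by
      intro k hk
      obtain ⟨i, _, rfl⟩ := Finset.mem_image.1 hk
      exact f.2.1 i⟩
  invFun t := ⟨(t.1.orderEmbOfFin t.2.1 : Fin n → ℕ),
    fun i => t.2.2 _ (Finset.orderEmbOfFin_mem _ _ _),
    (t.1.orderEmbOfFin t.2.1).strictMono⟩
  left_inv f := by
    apply Subtype.ext
    exact (Finset.orderEmbOfFin_unique _
      (fun i => Finset.mem_image_of_mem _ (Finset.mem_univ i)) f.2.2).symm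
  right_inv t := by
    apply Subtype.ext
    exact image_orderEmbOfFin t.1 t.2.1

lemma mzv_eq_E (n : ℕ) : mzv (fun _ : Fin n => (2 : ℝ)) = E n := by
  rw [mzv, E, ← Equiv.tsum_eq (eqv n) (fun t => W t.1)]
  refine tsum_congr fun f => ?_
  have hterm : ∀ i : Fin n, ((f.1 i : ℝ)) ^ (-(2 : ℝ)) = ww (f.1 i) := by
    intro i
    rw [Real.rpow_neg (Nat.cast_nonneg _),
      show (2 : ℝ) = ((2 : ℕ) : ℝ) by norm_num, Real.rpow_natCast]
    rfl
  rw [Finset.prod_congr rfl fun i _ => hterm i]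
  show ∏ i, ww (f.1 i) = W ((eqv n) f).1
  rw [W]
  show ∏ i, ww (f.1 i) = ∏ k ∈ Finset.image f.1 Finset.univ, ww k
  rw [Finset.prod_image fun x _ y _ h => f.2.2.injective h]

lemma E_eq_cc (n : ℕ) : E n = cc n := by
  set M := max BB (π ^ 2) with hM
  have hM0 : 0 < M := lt_of_lt_of_le (by positivity : (0 : ℝ) < π ^ 2) (le_max_right _ _)
  set ρ := (BB + 1)⁻¹ with hρdef
  have hBB1 : (0 : ℝ) < BB + 1 := by have := BB_nonneg; linarith
  have hρ : 0 < ρ := inv_pos.2 hBB1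
  set d : ℕ → ℝ := fun j => (-1) ^ j * (E j - cc j) with hd
  have hzero : ∀ y ∈ Set.Ioo (0 : ℝ) ρ, ∑' j, d j * y ^ j = 0 := by
    intro y hy
    set x := Real.sqrt y with hx
    have hx0 : 0 < x := Real.sqrt_pos.2 hy.1
    have hx2 : x ^ 2 = y := Real.sq_sqrt hy.1.le
    have hqB : x ^ 2 * BB < 1 := by
      rw [hx2]
      calc y * BB ≤ y * (BB + 1) := by nlinarith [hy.1.le, BB_nonneg]
        _ < ρ * (BB + 1) := by
            have := hy.2
            nlinarith
        _ = 1 := by rw [hρdef]; field_simp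
    have h1 : Summable (fun j => (-x ^ 2) ^ j * E j) := by
      refine Summable.of_norm_bounded
        (summable_geometric_of_lt_one (mul_nonneg (sq_nonneg x) BB_nonneg) hqB) fun j => ?_
      calc ‖(-x ^ 2) ^ j * E j‖ = (x ^ 2) ^ j * E j := by
            rw [Real.norm_eq_abs, abs_mul, abs_pow, abs_neg,
              abs_of_nonneg (sq_nonneg x), abs_of_nonneg (E_nonneg j)]
        _ ≤ (x ^ 2) ^ j * BB ^ j := mul_le_mul_of_nonneg_left (E_le j) (by positivity)
        _ = (x ^ 2 * BB) ^ j := (mul_pow _ _ _).symm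
    have h2 : HasSum (fun j => (-x ^ 2) ^ j * cc j) (Real.sin (π * x) / (π * x)) :=
      hasSum_cc hx0
    have h3 : ∑' j, (-x ^ 2) ^ j * E j = Real.sin (π * x) / (π * x) := sum_E_eq hx0 hqB
    calc ∑' j, d j * y ^ j
        = ∑' j, ((-x ^ 2) ^ j * E j - (-x ^ 2) ^ j * cc j) := by
          refine tsum_congr fun j => ?_
          rw [hd, ← hx2]
          ring
      _ = (∑' j, (-x ^ 2) ^ j * E j) - ∑' j, (-x ^ 2) ^ j * cc j :=
          Summable.tsum_sub h1 h2.summable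
      _ = 0 := by rw [h3, h2.tsum_eq, sub_self]
  have hdbound : ∀ j, |d j| ≤ 2 * M ^ j := by
    intro j
    have hE2 : E j ≤ M ^ j :=
      le_trans (E_le j) (pow_le_pow_left₀ BB_nonneg (le_max_left _ _) j)
    have hc2 : cc j ≤ M ^ j :=
      le_trans (cc_le j) (pow_le_pow_left₀ (by positivity) (le_max_right _ _) j)
    rw [hd, abs_mul, abs_pow, abs_neg, abs_one, one_pow, one_mul]
    calc |E j - cc j| ≤ |E j| + |cc j| := abs_sub _ _
      _ = E j + cc j := by rw [abs_of_nonneg (E_nonneg j), abs_of_nonneg (cc_nonneg j)]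
      _ ≤ M ^ j + M ^ j := add_le_add hE2 hc2
      _ = 2 * M ^ j := by ring
  have hall := coef_zero (by norm_num : (0:ℝ) ≤ 2) hM0 hρ hdbound hzero
  have hn := hall n
  rw [hd] at hn
  have hne : ((-1 : ℝ)) ^ n ≠ 0 := pow_ne_zero n (by norm_num)
  have := (mul_eq_zero.1 hn).resolve_left hne
  linarith [sub_eq_zero.1 this]

end ZetaTwoAux

/-- `ζ({2}^n) = π^{2n}/(2n+1)!`. -/
theorem zeta_two_rep (n : ℕ) (hn : 1 ≤ n) :
    mzv (fun _ : Fin n => (2 : ℝ)) = π ^ (2 * n) / (Nat.factorial (2 * n + 1)) := by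
  rw [ZetaTwoAux.mzv_eq_E, ZetaTwoAux.E_eq_cc]
  rfl
end

section
/- For every positive integer n, ζ⋆({2}^n) = (−1)^n (π^{2n}/(2n)!) · (2 − 2^{2n}) · B_{2n}, where B_{2n} is the 2n-th Bernoulli number; equivalently ζ⋆({2}^n) = (2πi)^{2n} B_{2n}(1/2)/(2n)!. -/
open Real Finset

namespace ZStarAux

open Filter

/-- Iterated partial sums: `H n N = ∑_{1 ≤ k₁ ≤ ⋯ ≤ k_n ≤ N} ∏ 1/k_i²`. -/
noncomputable def H : ℕ → ℕ → ℝ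
  | 0, _ => 1
  | n+1, N => ∑ m ∈ Finset.Icc 1 N, H n m / (m : ℝ) ^ 2

/-- Partial fraction coefficients. -/
noncomputable def c (N m : ℕ) : ℝ :=
  2 * (-1) ^ (m + 1) * ((N.factorial : ℝ)) ^ 2 /
    (((N - m).factorial : ℝ) * ((N + m).factorial : ℝ))

lemma c_choose {N m : ℕ} (h : m ≤ N) :
    c N m = 2 * (-1) ^ (m + 1) * (((2 * N).choose (N + m) : ℝ)) /
      (((2 * N).choose N : ℝ)) := by
  have e1 : (2 * N).choose (N + m) * (N + m).factorial * (N - m).factorial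
      = (2 * N).factorial := by
    have := Nat.choose_mul_factorial_mul_factorial (show N + m ≤ 2 * N by omega)
    rwa [show 2 * N - (N + m) = N - m by omega] at this
  have e2 : (2 * N).choose N * N.factorial * N.factorial = (2 * N).factorial := by
    have := Nat.choose_mul_factorial_mul_factorial (show N ≤ 2 * N by omega)
    rwa [show 2 * N - N = N by omega] at this
  have e1' : (((2 * N).choose (N + m) : ℝ)) * ((N + m).factorial : ℝ) *
      ((N - m).factorial : ℝ) = ((2 * N).factorial : ℝ) := by exact_mod_cast e1
  have e2' : (((2 * N).choose N : ℝ)) * (N.factorial : ℝ) * (N.factorial : ℝ)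
      = ((2 * N).factorial : ℝ) := by exact_mod_cast e2
  have hf1 : ((N - m).factorial : ℝ) ≠ 0 := Nat.cast_ne_zero.2 (Nat.factorial_ne_zero _)
  have hf2 : ((N + m).factorial : ℝ) ≠ 0 := Nat.cast_ne_zero.2 (Nat.factorial_ne_zero _)
  have hc0 : (((2 * N).choose N : ℝ)) ≠ 0 :=
    Nat.cast_ne_zero.2 (Nat.choose_pos (by omega : N ≤ 2 * N)).ne'
  rw [c, div_eq_div_iff (by positivity) hc0]
  linear_combination (2*(-1:ℝ)^(m+1)) * e2' - (2*(-1:ℝ)^(m+1)) * e1'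

lemma c_bound {N m : ℕ} (h : m ≤ N) : |c N m| ≤ 2 := by
  have hle : ((2 * N).choose (N + m) : ℝ) ≤ ((2 * N).choose N : ℝ) := by
    have := Nat.choose_le_middle (N + m) (2 * N)
    rw [show 2 * N / 2 = N by omega] at this
    exact_mod_cast this
  have hc0 : (0:ℝ) < ((2 * N).choose N : ℝ) := by
    have : 0 < (2 * N).choose N := Nat.choose_pos (by omega)
    exact_mod_cast this
  rw [c_choose h, abs_div, abs_mul, abs_mul]
  rw [abs_of_pos hc0]
  simp only [abs_pow, abs_neg, abs_one, one_pow, mul_one, abs_two,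
    abs_of_nonneg (by positivity : (0:ℝ) ≤ ((2 * N).choose (N + m) : ℝ))]
  rw [div_le_iff₀ hc0]
  nlinarith

lemma c_rec {N m : ℕ} (h1 : 1 ≤ m) (h2 : m ≤ N) :
    c (N+1) m * (((N:ℝ)+1)^2 - (m:ℝ)^2) = c N m * ((N:ℝ)+1)^2 := by
  have hs1 : N + 1 - m = (N - m) + 1 := by omega
  have hs2 : N + 1 + m = (N + m) + 1 := by omega
  have hf1 : ((N - m).factorial : ℝ) ≠ 0 := Nat.cast_ne_zero.2 (Nat.factorial_ne_zero _)
  have hf2 : ((N + m).factorial : ℝ) ≠ 0 := Nat.cast_ne_zero.2 (Nat.factorial_ne_zero _)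
  have hcast : ((N - m : ℕ) : ℝ) = (N : ℝ) - (m : ℝ) := by
    push_cast [Nat.cast_sub h2]; ring
  have hd1 : ((N:ℝ) - (m:ℝ) + 1) ≠ 0 := by
    have hm : (m:ℝ) ≤ (N:ℝ) := by exact_mod_cast h2
    linarith
  have hd2 : ((N:ℝ) + (m:ℝ) + 1) ≠ 0 := by positivity
  rw [c, c, hs1, hs2]
  simp only [Nat.factorial_succ]
  push_cast [hcast]
  rw [div_mul_eq_mul_div, div_mul_eq_mul_div, div_eq_div_iff
    (by exact mul_ne_zero (mul_ne_zero hd1 hf1) (mul_ne_zero hd2 hf2))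
    (mul_ne_zero hf1 hf2)]
  ring

lemma sum_c {N : ℕ} (hN : 1 ≤ N) : ∑ m ∈ Icc 1 N, c N m = 1 := by
  -- integer alternating sum identity
  set T : ℤ := ∑ m ∈ Icc 1 N, (-1:ℤ)^m * ((2*N).choose (N+m)) with hT
  have halt : ∑ i ∈ range (2*N+1), (-1:ℤ)^i * ((2*N).choose i) = 0 :=
    Int.alternating_sum_range_choose_of_ne (by omega)
  have hsplit : ∑ i ∈ range (2*N+1), (-1:ℤ)^i * ((2*N).choose i)
      = (∑ i ∈ Finset.Ico 0 N, (-1:ℤ)^i * ((2*N).choose i))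
        + ((-1:ℤ)^N * ((2*N).choose N))
        + ∑ i ∈ Finset.Ico (N+1) (2*N+1), (-1:ℤ)^i * ((2*N).choose i) := by
    rw [Finset.range_eq_Ico, ← Finset.sum_Ico_consecutive _ (by omega : 0 ≤ N) (by omega : N ≤ 2*N+1),
      Finset.sum_eq_sum_Ico_succ_bot (by omega : N < 2*N+1)]
    ring
  have hA : ∑ i ∈ Finset.Ico 0 N, (-1:ℤ)^i * ((2*N).choose i) = (-1:ℤ)^N * T := by
    rw [hT, Finset.mul_sum]
    apply Finset.sum_nbij' (fun i => N - i) (fun m => N - m)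
    · intro i hi; simp only [Finset.mem_Ico] at hi; simp only [Finset.mem_Icc]; omega
    · intro m hm; simp only [Finset.mem_Icc] at hm; simp only [Finset.mem_Ico]; omega
    · intro i hi; simp only [Finset.mem_Ico] at hi; omega
    · intro m hm; simp only [Finset.mem_Icc] at hm; omega
    · intro i hi
      simp only [Finset.mem_Ico] at hi
      have hch : (2*N).choose (N + (N - i)) = (2*N).choose i := by
        rw [show N + (N - i) = 2*N - i by omega]
        exact Nat.choose_symm (by omega)
      rw [hch, ← mul_assoc, ← pow_add, show N + (N - i) = 2*(N-i) + i by omega,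
        pow_add, pow_mul]
      norm_num
  have hB : ∑ i ∈ Finset.Ico (N+1) (2*N+1), (-1:ℤ)^i * ((2*N).choose i) = (-1:ℤ)^N * T := by
    rw [hT, Finset.mul_sum]
    apply Finset.sum_nbij' (fun i => i - N) (fun m => N + m)
    · intro i hi; simp only [Finset.mem_Ico] at hi; simp only [Finset.mem_Icc]; omega
    · intro m hm; simp only [Finset.mem_Icc] at hm; simp only [Finset.mem_Ico]; omega
    · intro i hi; simp only [Finset.mem_Ico] at hi; omega
    · intro m hm; simp only [Finset.mem_Icc] at hm; omega
    · intro i hi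
      simp only [Finset.mem_Ico] at hi
      rw [show N + (i - N) = i by omega, ← mul_assoc, ← pow_add,
        show N + (i - N) = i by omega]
  have hTC : 2 * T = -((2*N).choose N : ℤ) := by
    have := halt
    rw [hsplit, hA, hB] at this
    have h2 : (-1:ℤ)^N * (2 * T + ((2*N).choose N : ℤ)) = 0 := by linear_combination this
    rcases mul_eq_zero.mp h2 with h | h
    · exact absurd h (pow_ne_zero _ (by norm_num))
    · linarith
  -- now the real sum
  have hc0 : (0:ℝ) < (((2*N).choose N : ℕ) : ℝ) := by
    have : 0 < (2*N).choose N := Nat.choose_pos (by omega)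
    exact_mod_cast this
  have : ∑ m ∈ Icc 1 N, c N m
      = (∑ m ∈ Icc 1 N, (-1:ℝ)^(m+1) * (((2*N).choose (N+m) : ℕ) : ℝ)) * (2 / (((2*N).choose N : ℕ) : ℝ)) := by
    rw [Finset.sum_mul]
    apply Finset.sum_congr rfl
    intro m hm
    simp only [Finset.mem_Icc] at hm
    rw [c_choose hm.2]
    ring
  rw [this]
  have hsum : (∑ m ∈ Icc 1 N, (-1:ℝ)^(m+1) * (((2*N).choose (N+m) : ℕ) : ℝ)) = ((-T : ℤ) : ℝ) := by
    push_cast [hT]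
    rw [← Finset.sum_neg_distrib]
    apply Finset.sum_congr rfl
    intro m _
    ring
  rw [hsum]
  have : ((-T : ℤ) : ℝ) = (((2*N).choose N : ℕ) : ℝ) / 2 := by
    have : ((2 * T : ℤ) : ℝ) = ((-((2*N).choose N : ℤ) : ℤ) : ℝ) := by exact_mod_cast hTC
    push_cast at this ⊢
    linarith
  rw [this]
  field_simp

lemma inner_tel {j : ℕ} (hj : 1 ≤ j) :
    ∀ N, j ≤ N → ∑ m ∈ Icc j N, c m j / (m:ℝ)^2 = c N j / (j:ℝ)^2 := by
  intro N
  induction N with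
  | zero => intro h; omega
  | succ N ih =>
    intro h
    rcases Nat.lt_or_ge N j with hlt | hge
    · have : j = N + 1 := by omega
      subst this
      simp
    · rw [Finset.sum_Icc_succ_top (by omega : j ≤ N + 1), ih hge]
      have hrec := c_rec hj hge
      have hj0 : ((j:ℝ))^2 ≠ 0 := by positivity
      have hN0 : (((N:ℝ))+1)^2 ≠ 0 := by positivity
      have hcast : ((N+1 : ℕ) : ℝ) = (N:ℝ) + 1 := by push_cast; ring
      rw [hcast]
      field_simp
      nlinarith [hrec]

lemma base_closed : ∀ N, ∑ m ∈ Icc 1 N, c N m / (m:ℝ)^2 = ∑ m ∈ Icc 1 N, 1/(m:ℝ)^2 := by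
  intro N
  induction N with
  | zero => simp
  | succ N ih =>
    rw [Finset.sum_Icc_succ_top (by omega : 1 ≤ N + 1),
      Finset.sum_Icc_succ_top (by omega : 1 ≤ N + 1)]
    have hstep : ∀ m ∈ Icc 1 N, c (N+1) m / (m:ℝ)^2
        = c N m / (m:ℝ)^2 + c (N+1) m / ((N:ℝ)+1)^2 := by
      intro m hm
      simp only [Finset.mem_Icc] at hm
      have hrec := c_rec hm.1 hm.2
      have hm0 : ((m:ℝ))^2 ≠ 0 := by
        have : (0:ℝ) < (m:ℝ) := by exact_mod_cast hm.1
        positivity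
      have hN0 : (((N:ℝ))+1)^2 ≠ 0 := by positivity
      field_simp
      rw [div_add' _ _ _ hm0, div_left_inj' hm0]
      linear_combination hrec
    rw [Finset.sum_congr rfl hstep, Finset.sum_add_distrib, ih, ← Finset.sum_div]
    have hsum : ∑ m ∈ Icc 1 N, c (N+1) m = 1 - c (N+1) (N+1) := by
      have := sum_c (show 1 ≤ N + 1 by omega)
      rw [Finset.sum_Icc_succ_top (by omega : 1 ≤ N + 1)] at this
      linarith
    rw [hsum]
    have hcast : ((N+1 : ℕ) : ℝ) = (N:ℝ) + 1 := by push_cast; ring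
    rw [hcast]
    have hN0 : (((N:ℝ))+1)^2 ≠ 0 := by positivity
    field_simp
    ring

lemma H_closed : ∀ n N, H (n+1) N = ∑ m ∈ Icc 1 N, c N m / (m:ℝ)^(2*(n+1)) := by
  intro n
  induction n with
  | zero =>
    intro N
    have : H 1 N = ∑ m ∈ Icc 1 N, 1 / (m:ℝ)^2 := by
      simp [H]
    rw [this, ← base_closed N]
  | succ n ih =>
    intro N
    have hH : H (n+2) N = ∑ m ∈ Icc 1 N, (∑ j ∈ Icc 1 m, c m j / (j:ℝ)^(2*(n+1))) / (m:ℝ)^2 := by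
      show (∑ m ∈ Finset.Icc 1 N, H (n+1) m / (m : ℝ)^2) = _
      exact Finset.sum_congr rfl fun m _ => by rw [ih m]
    rw [hH]
    have hsplit : ∀ m ∈ Icc 1 N, (∑ j ∈ Icc 1 m, c m j / (j:ℝ)^(2*(n+1))) / (m:ℝ)^2
        = ∑ j ∈ Icc 1 m, c m j / (m:ℝ)^2 * ((j:ℝ)^(2*(n+1)))⁻¹ := by
      intro m _
      rw [Finset.sum_div]
      exact Finset.sum_congr rfl fun j _ => by ring
    rw [Finset.sum_congr rfl hsplit]
    rw [Finset.sum_comm' (t' := Icc 1 N) (s' := fun j => Icc j N)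
      (by intro x y; simp only [Finset.mem_Icc]; omega)]
    apply Finset.sum_congr rfl
    intro j hj
    simp only [Finset.mem_Icc] at hj
    rw [← Finset.sum_mul, inner_tel hj.1 N hj.2]
    have hj0 : (j:ℝ) ≠ 0 := by
      have : (0:ℝ) < (j:ℝ) := by exact_mod_cast hj.1
      positivity
    have hpow : (j:ℝ)^(2*(n+1+1)) = (j:ℝ)^2 * (j:ℝ)^(2*(n+1)) := by
      rw [← pow_add]; ring_nf
    rw [hpow]
    field_simp

lemma H_nonneg : ∀ n N, 0 ≤ H n N := by
  intro n
  induction n with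
  | zero => intro N; simp [H]
  | succ n ih =>
    intro N
    apply Finset.sum_nonneg
    intro m _
    apply div_nonneg (ih m) (by positivity)

lemma H_mono (n : ℕ) : Monotone (fun N => H n N) := by
  cases n with
  | zero => exact monotone_const
  | succ n =>
    intro N M h
    apply Finset.sum_le_sum_of_subset_of_nonneg
    · exact Finset.Icc_subset_Icc le_rfl h
    · intro m _ _
      exact div_nonneg (H_nonneg n m) (by positivity)

lemma H_le (n : ℕ) (N : ℕ) : H (n+1) N ≤ π^2 / 3 := by
  rw [H_closed n N]
  have h1 : ∑ m ∈ Icc 1 N, c N m / (m:ℝ)^(2*(n+1)) ≤ ∑ m ∈ Icc 1 N, 2 * (1/(m:ℝ)^2) := by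
    apply Finset.sum_le_sum
    intro m hm
    simp only [Finset.mem_Icc] at hm
    have hm1 : (1:ℝ) ≤ (m:ℝ) := by exact_mod_cast hm.1
    have hmpos : (0:ℝ) < (m:ℝ) := by linarith
    have hple : (m:ℝ)^2 ≤ (m:ℝ)^(2*(n+1)) := by
      apply pow_le_pow_right₀ hm1; omega
    have h2 : c N m / (m:ℝ)^(2*(n+1)) ≤ 2 / (m:ℝ)^(2*(n+1)) := by
      apply div_le_div_of_nonneg_right ?_ (by positivity) |>.trans_eq rfl
      · exact le_trans (le_abs_self _) (c_bound hm.2)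
    refine h2.trans ?_
    rw [mul_one_div]
    apply div_le_div_of_nonneg_left (by norm_num) (by positivity) hple
  refine h1.trans ?_
  have hs : Summable (fun m : ℕ => 2 * (1/(m:ℝ)^2)) := hasSum_zeta_two.summable.mul_left 2
  have := Summable.sum_le_tsum (Icc 1 N) (fun m _ => by positivity) hs
  refine this.trans ?_
  rw [(hasSum_zeta_two.mul_left 2).tsum_eq]
  ring_nf
  linarith [sq_nonneg π]

open scoped Classical in
noncomputable def FA (r N : ℕ) : Finset (Fin r → ℕ) :=
  (Fintype.piFinset fun _ : Fin r => Finset.Icc 1 N).filter Monotone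

lemma mem_FA {r N : ℕ} {f : Fin r → ℕ} :
    f ∈ FA r N ↔ (∀ i, 1 ≤ f i ∧ f i ≤ N) ∧ Monotone f := by
  classical
  simp [FA, Fintype.mem_piFinset, Finset.mem_filter, Finset.mem_Icc, forall_and]

lemma sum_FA : ∀ (r N : ℕ), ∑ f ∈ FA r N, (∏ i, 1 / ((f i : ℝ))^2) = H r N := by
  intro r
  induction r with
  | zero =>
    intro N
    have hFA : FA 0 N = {![]} := by
      apply Finset.eq_singleton_iff_unique_mem.mpr
      constructor
      · rw [mem_FA]
        exact ⟨fun i => i.elim0, fun a b _ => le_rfl⟩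
      · intro f _
        exact funext fun i => i.elim0
    rw [hFA]
    simp [H]
  | succ r ih =>
    intro N
    have key : ∑ f ∈ FA (r+1) N, (∏ i, 1 / ((f i : ℝ))^2)
        = ∑ p ∈ (Finset.Icc 1 N).sigma (fun m => FA r m),
            (1 / ((p.1 : ℝ))^2 * ∏ i, 1 / ((p.2 i : ℝ))^2) := by
      apply Finset.sum_nbij' (fun f => (⟨f (Fin.last r), Fin.init f⟩ : Σ _ : ℕ, (Fin r → ℕ)))
        (fun p => Fin.snoc p.2 p.1)
      · intro f hf
        rw [mem_FA] at hf
        obtain ⟨hv, hm⟩ := hf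
        rw [Finset.mem_sigma]
        constructor
        · rw [Finset.mem_Icc]
          exact ⟨(hv _).1, (hv _).2⟩
        · rw [mem_FA]
          refine ⟨fun i => ⟨(hv _).1, hm (Fin.le_last _)⟩, ?_⟩
          intro a b hab
          exact hm (by rwa [Fin.castSucc_le_castSucc_iff])
      · rintro ⟨m, g⟩ hp
        rw [Finset.mem_sigma, Finset.mem_Icc, mem_FA] at hp
        obtain ⟨⟨hm1, hmN⟩, hgv, hgm⟩ := hp
        rw [mem_FA]
        constructor
        · intro i
          rcases Fin.eq_castSucc_or_eq_last i with ⟨j, rfl⟩ | rfl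
          · rw [Fin.snoc_castSucc]
            exact ⟨(hgv j).1, le_trans (hgv j).2 hmN⟩
          · rw [Fin.snoc_last]
            exact ⟨hm1, hmN⟩
        · rw [Fin.monotone_iff_le_succ]
          intro i
          rw [Fin.snoc_castSucc]
          rcases Fin.eq_castSucc_or_eq_last i.succ with ⟨j, hj⟩ | hl
          · rw [hj, Fin.snoc_castSucc]
            apply hgm
            have : Fin.castSucc i < Fin.castSucc j := by
              rw [← hj]; exact Fin.castSucc_lt_succ
            exact le_of_lt (by rwa [Fin.castSucc_lt_castSucc_iff] at this)
          · rw [hl, Fin.snoc_last]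
            exact (hgv i).2
      · intro f _
        exact Fin.snoc_init_self f
      · rintro ⟨m, g⟩ _
        simp only [Fin.snoc_last, Fin.init_snoc]
      · intro f _
        rw [Fin.prod_univ_castSucc, mul_comm]
        rfl
    rw [key, Finset.sum_sigma]
    show _ = ∑ m ∈ Finset.Icc 1 N, H r m / (m:ℝ)^2
    apply Finset.sum_congr rfl
    intro m _
    have : ∑ g ∈ FA r m, (1 / ((m:ℝ))^2 * ∏ i, 1 / ((g i : ℝ))^2) = H r m / (m:ℝ)^2 := by
      rw [← Finset.mul_sum, ih m]; ring
    exact this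

lemma H_le' {n : ℕ} (hn : 1 ≤ n) (N : ℕ) : H n N ≤ π^2 / 3 := by
  obtain ⟨k, rfl⟩ : ∃ k, n = k + 1 := ⟨n - 1, by omega⟩
  exact H_le k N

lemma hasSum_indicator (n : ℕ) (hn : 1 ≤ n) :
    HasSum (Set.indicator {f : Fin n → ℕ | (∀ i, 1 ≤ f i) ∧ Monotone f}
      (fun f => ∏ i, 1 / ((f i : ℝ))^2)) (⨆ N, H n N) := by
  classical
  set s : Set (Fin n → ℕ) := {f : Fin n → ℕ | (∀ i, 1 ≤ f i) ∧ Monotone f} with hs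
  set P : (Fin n → ℕ) → ℝ := fun f => ∏ i, 1 / ((f i : ℝ))^2 with hP
  have hP0 : ∀ f, 0 ≤ P f := fun f => Finset.prod_nonneg fun i _ => by positivity
  have hF0 : ∀ f, 0 ≤ Set.indicator s P f := fun f => Set.indicator_nonneg (fun g _ => hP0 g) f
  have hbdd : BddAbove (Set.range fun N => H n N) := by
    refine ⟨π^2/3, ?_⟩
    rintro x ⟨N, rfl⟩
    exact H_le' hn N
  have hFA : ∀ N, ∑ f ∈ FA n N, Set.indicator s P f = H n N := by
    intro N
    rw [← sum_FA n N]
    apply Finset.sum_congr rfl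
    intro f hf
    rw [mem_FA] at hf
    exact Set.indicator_of_mem (by exact ⟨fun i => (hf.1 i).1, hf.2⟩) P
  have hi0 : n - 1 < n := by omega
  apply hasSum_of_isLUB_of_nonneg _ hF0
  constructor
  · rintro x ⟨t, rfl⟩
    show ∑ f ∈ t, Set.indicator s P f ≤ ⨆ N, H n N
    have hsub : t.filter (· ∈ s) ⊆ FA n (1 + t.sup (fun f => f ⟨n-1, hi0⟩)) := by
      intro f hf
      rw [Finset.mem_filter] at hf
      obtain ⟨hft, hfs⟩ := hf
      rw [mem_FA]
      refine ⟨fun i => ⟨hfs.1 i, ?_⟩, hfs.2⟩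
      have h1 : f i ≤ f ⟨n-1, hi0⟩ := by
        apply hfs.2
        rw [Fin.le_def]
        have := i.2
        show (i : ℕ) ≤ n - 1
        omega
      have h2 : f ⟨n-1, hi0⟩ ≤ t.sup (fun g => g ⟨n-1, hi0⟩) :=
        Finset.le_sup (f := fun g => g ⟨n-1, hi0⟩) hft
      exact (h1.trans h2).trans (Nat.le_add_left _ _)
    have e1 : ∑ f ∈ t, Set.indicator s P f = ∑ f ∈ t.filter (· ∈ s), Set.indicator s P f := by
      rw [Finset.sum_filter_of_ne]
      intro f _ hne
      by_contra hmem
      exact hne (Set.indicator_of_notMem hmem P)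
    rw [e1]
    calc ∑ f ∈ t.filter (· ∈ s), Set.indicator s P f
        ≤ ∑ f ∈ FA n (1 + t.sup (fun f => f ⟨n-1, hi0⟩)), Set.indicator s P f :=
          Finset.sum_le_sum_of_subset_of_nonneg hsub (fun f _ _ => hF0 f)
      _ = H n (1 + t.sup (fun f => f ⟨n-1, hi0⟩)) := hFA _
      _ ≤ ⨆ N, H n N := le_ciSup hbdd _
  · rintro b hb
    apply ciSup_le
    intro N
    rw [← hFA N]
    exact hb ⟨FA n N, rfl⟩

lemma mzsv_eq (n : ℕ) (hn : 1 ≤ n) : mzsv (fun _ : Fin n => (2:ℝ)) = ⨆ N, H n N := by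
  have hs := hasSum_indicator n hn
  rw [← hasSum_subtype_iff_indicator] at hs
  have heq : mzsv (fun _ : Fin n => (2:ℝ))
      = ∑' f : {f : Fin n → ℕ // (∀ i, 1 ≤ f i) ∧ Monotone f}, ∏ i, 1 / ((f.1 i : ℝ))^2 := by
    rw [mzsv]
    apply tsum_congr
    intro f
    apply Finset.prod_congr rfl
    intro i _
    have h1 : (0:ℝ) < (f.1 i : ℝ) := by
      have := f.2.1 i
      exact_mod_cast Nat.lt_of_lt_of_le Nat.zero_lt_one this
    rw [Real.rpow_neg h1.le, show (2:ℝ) = ((2:ℕ):ℝ) by norm_num, Real.rpow_natCast,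
      ← one_div]
  rw [heq]
  exact hs.tsum_eq

lemma ratio_tendsto (a b : ℝ) :
    Filter.Tendsto (fun N : ℕ => ((N:ℝ) - a)/((N:ℝ) + b)) Filter.atTop (nhds 1) := by
  have h1 : Filter.Tendsto (fun N : ℕ => (N:ℝ) + b) Filter.atTop Filter.atTop :=
    Filter.tendsto_atTop_add_const_right _ b tendsto_natCast_atTop_atTop
  have h2 : Filter.Tendsto (fun N : ℕ => (a + b)/((N:ℝ) + b)) Filter.atTop (nhds 0) :=
    Filter.Tendsto.div_atTop tendsto_const_nhds h1
  have h3 := (tendsto_const_nhds (x := (1:ℝ))).sub h2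
  rw [sub_zero] at h3
  apply h3.congr'
  filter_upwards [h1.eventually_gt_atTop 0] with N hN
  have hne : (N:ℝ) + b ≠ 0 := hN.ne'
  field_simp
  ring

lemma fact_ratio : ∀ (m N : ℕ), m ≤ N →
    ((N.factorial : ℝ)) = ((N - m).factorial : ℝ) * ∏ j ∈ range m, (((N - j : ℕ) : ℝ)) := by
  intro m
  induction m with
  | zero => intro N _; simp
  | succ m ih =>
    intro N h
    rw [Finset.prod_range_succ, ih N (by omega), show N - m = (N - (m+1)) + 1 from by omega,
      Nat.factorial_succ]
    push_cast
    ring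

lemma c_eq_prod {m N : ℕ} (h : m ≤ N) :
    c N m = 2 * (-1)^(m+1) *
      ∏ j ∈ range m, ((((N - j : ℕ) : ℝ)) / (((N + m - j : ℕ) : ℝ))) := by
  have h2 := fact_ratio m (N + m) (by omega)
  rw [show N + m - m = N from by omega] at h2
  have h1 := fact_ratio m N h
  have hne : ∀ j ∈ range m, ((((N + m - j : ℕ) : ℝ))) ≠ 0 := by
    intro j hj
    simp only [Finset.mem_range] at hj
    have h0 : 0 < N + m - j := by omega
    exact_mod_cast h0.ne'
  have hprodne : (∏ j ∈ range m, (((N + m - j : ℕ) : ℝ))) ≠ 0 :=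
    Finset.prod_ne_zero_iff.mpr hne
  have hfne : ((N - m).factorial : ℝ) ≠ 0 := Nat.cast_ne_zero.2 (Nat.factorial_ne_zero _)
  have hne1 : ∀ j ∈ range m, ((((N - j : ℕ) : ℝ))) ≠ 0 := by
    intro j hj
    simp only [Finset.mem_range] at hj
    have h0 : 0 < N - j := by omega
    exact_mod_cast h0.ne'
  have hprodne1 : (∏ j ∈ range m, (((N - j : ℕ) : ℝ))) ≠ 0 :=
    Finset.prod_ne_zero_iff.mpr hne1
  rw [c, h2, h1, Finset.prod_div_distrib]
  field_simp

lemma c_tendsto (m : ℕ) :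
    Filter.Tendsto (fun N => c N m) Filter.atTop (nhds (2 * (-1:ℝ)^(m+1))) := by
  have hprod : Filter.Tendsto
      (fun N : ℕ => ∏ j ∈ range m, ((((N - j : ℕ) : ℝ)) / (((N + m - j : ℕ) : ℝ))))
      Filter.atTop (nhds 1) := by
    have h := tendsto_finset_prod (f := fun (j : ℕ) (N : ℕ) =>
        (((N - j : ℕ) : ℝ)) / (((N + m - j : ℕ) : ℝ)))
      (x := Filter.atTop) (a := fun _ => (1:ℝ)) (Finset.range m) ?_
    · simpa using h
    · intro j hj
      simp only [Finset.mem_range] at hj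
      apply (ratio_tendsto (j:ℝ) (((m - j : ℕ) : ℝ))).congr'
      filter_upwards [Filter.eventually_ge_atTop m] with N hN
      have e1 : ((N - j : ℕ) : ℝ) = (N:ℝ) - (j:ℝ) := by
        have hjN : j ≤ N := by omega
        push_cast [hjN]
        ring
      have e2 : ((N + m - j : ℕ) : ℝ) = (N:ℝ) + (((m - j : ℕ)) : ℝ) := by
        rw [show N + m - j = N + (m - j) from by omega]
        push_cast
        ring
      rw [e1, e2]
  have h2 := hprod.const_mul (2 * (-1:ℝ)^(m+1))
  rw [mul_one] at h2
  apply h2.congr'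
  filter_upwards [Filter.eventually_ge_atTop m] with N hN
  exact (c_eq_prod hN).symm

lemma closed_tendsto (n : ℕ) (hn : 1 ≤ n) :
    Filter.Tendsto (fun N => ∑ m ∈ Icc 1 N, c N m / (m:ℝ)^(2*n)) Filter.atTop
      (nhds (∑' m : ℕ, 2 * (-1:ℝ)^(m+1) / (m:ℝ)^(2*n))) := by
  classical
  have hbound_sum : Summable (fun m : ℕ => 2 * (1/(m:ℝ)^2)) :=
    hasSum_zeta_two.summable.mul_left 2
  have hab : ∀ m : ℕ, Filter.Tendsto
      (fun N : ℕ => if m ∈ Icc 1 N then c N m / (m:ℝ)^(2*n) else 0) Filter.atTop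
      (nhds (2 * (-1:ℝ)^(m+1) / (m:ℝ)^(2*n))) := by
    intro m
    rcases Nat.eq_zero_or_pos m with rfl | hm
    · have hz : (2:ℝ) * (-1:ℝ)^(0+1) / ((0:ℕ):ℝ)^(2*n) = 0 := by
        rw [Nat.cast_zero, zero_pow (by omega : 2*n ≠ 0), div_zero]
      rw [hz]
      have hz2 : ∀ N, (if (0:ℕ) ∈ Icc 1 N then c N 0 / ((0:ℕ):ℝ)^(2*n) else 0) = 0 := by
        intro N
        rw [if_neg (by simp)]
      simpa [hz2] using tendsto_const_nhds (x := (0:ℝ))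
    · have hc := (c_tendsto m).div_const ((m:ℝ)^(2*n))
      apply hc.congr'
      filter_upwards [Filter.eventually_ge_atTop m] with N hN
      rw [if_pos (by simp only [Finset.mem_Icc]; omega)]
  have hbound : ∀ (N : ℕ) (m : ℕ),
      ‖if m ∈ Icc 1 N then c N m / (m:ℝ)^(2*n) else 0‖ ≤ 2 * (1/(m:ℝ)^2) := by
    intro N m
    by_cases hm : m ∈ Icc 1 N
    · rw [if_pos hm]
      simp only [Finset.mem_Icc] at hm
      have hm1 : (1:ℝ) ≤ (m:ℝ) := by exact_mod_cast hm.1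
      have hmpos : (0:ℝ) < (m:ℝ)^(2*n) := by positivity
      rw [Real.norm_eq_abs, abs_div, abs_of_pos hmpos]
      have hb1 : |c N m| / (m:ℝ)^(2*n) ≤ 2 / (m:ℝ)^(2*n) :=
        div_le_div_of_nonneg_right (c_bound hm.2) hmpos.le |>.trans_eq rfl
      refine hb1.trans ?_
      rw [mul_one_div]
      apply div_le_div_of_nonneg_left (by norm_num) (by positivity)
      apply pow_le_pow_right₀ hm1
      omega
    · rw [if_neg hm, norm_zero]
      positivity
  have htend := tendsto_tsum_of_dominated_convergence hbound_sum hab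
    (Filter.Eventually.of_forall hbound)
  apply htend.congr
  intro N
  rw [tsum_eq_sum (s := Icc 1 N) (fun m hm => if_neg hm)]
  apply Finset.sum_congr rfl
  intro m hm
  rw [if_pos hm]

end ZStarAux

/-- `ζ⋆({2}^n) = (-1)^n (π^{2n}/(2n)!) (2-2^{2n}) B_{2n}`, equivalently
`ζ⋆({2}^n) = (2πi)^{2n} B_{2n}(1/2)/(2n)!`. -/
theorem zeta_star_two_rep (n : ℕ) (hn : 1 ≤ n) :
    mzsv (fun _ : Fin n => (2 : ℝ)) =
      (-1 : ℝ) ^ n * (π ^ (2 * n) / (Nat.factorial (2 * n))) * (2 - 2 ^ (2 * n)) *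
        ((bernoulli (2 * n) : ℚ) : ℝ) ∧
    (mzsv (fun _ : Fin n => (2 : ℝ)) : ℂ) =
      (2 * π * Complex.I) ^ (2 * n) *
        (((Polynomial.bernoulli (2 * n)).eval ((1 : ℚ) / 2) : ℚ) : ℂ) /
          (Nat.factorial (2 * n)) := by
  obtain ⟨k, rfl⟩ : ∃ k, n = k + 1 := ⟨n - 1, by omega⟩
  have hn1 : 1 ≤ k + 1 := by omega
  -- cosine Fourier sum at x = 1/2
  have hhalf : (1/2 : ℝ) ∈ Set.Icc (0:ℝ) 1 := ⟨by norm_num, by norm_num⟩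
  have hcos := hasSum_one_div_nat_pow_mul_cos (k := k+1) (by omega) hhalf
  have hE2 : HasSum (fun m : ℕ => 2 * (-1:ℝ)^(m+1) / (m:ℝ)^(2*(k+1)))
      ((-2:ℝ) * ((-1 : ℝ) ^ (k + 1 + 1) * (2 * π) ^ (2 * (k+1)) / 2 / (2 * (k+1)).factorial *
        (Polynomial.map (algebraMap ℚ ℝ) (Polynomial.bernoulli (2 * (k+1)))).eval (1/2 : ℝ))) := by
    have hfun : (fun m : ℕ => 2 * (-1:ℝ)^(m+1) / (m:ℝ)^(2*(k+1)))
        = fun m : ℕ => (-2:ℝ) * (1 / (m:ℝ)^(2*(k+1)) * Real.cos (2*π*(m:ℝ)*(1/2))) := by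
      funext m
      have hc : Real.cos (2*π*(m:ℝ)*(1/2)) = (-1:ℝ)^m := by
        rw [show 2*π*(m:ℝ)*(1/2) = (m:ℝ)*π - 0 by ring, Real.cos_nat_mul_pi_sub]
        simp
      rw [hc, pow_succ]
      ring
    rw [hfun]
    exact hcos.mul_left (-2)
  -- zeta value sum
  have hZ := hasSum_zeta_nat (k := k+1) (by omega)
  -- even part
  have hevens : HasSum (fun m : ℕ => if Even m then 1/(m:ℝ)^(2*(k+1)) else 0)
      (((2:ℝ)^(2*(k+1)))⁻¹ * ((-1 : ℝ) ^ (k + 1 + 1) * (2:ℝ) ^ (2 * (k+1) - 1) * π ^ (2 * (k+1)) *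
        ((bernoulli (2 * (k+1)) : ℚ) : ℝ) / (2 * (k+1)).factorial)) := by
    have hinj : Function.Injective (fun m : ℕ => 2*m) := by
      intro a b h
      have h2 : 2*a = 2*b := h
      omega
    rw [← Function.Injective.hasSum_iff hinj ?_]
    · have hcompfun : (fun m : ℕ => (if Even m then 1/(m:ℝ)^(2*(k+1)) else 0)) ∘ (fun m : ℕ => 2*m)
          = fun m : ℕ => ((2:ℝ)^(2*(k+1)))⁻¹ * (1 / (m:ℝ)^(2*(k+1))) := by
        funext m
        simp only [Function.comp_apply, if_pos (even_two_mul m)]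
        push_cast
        rw [mul_pow]
        by_cases hm : (m:ℝ) = 0
        · rw [hm, zero_pow (by omega : 2*(k+1) ≠ 0)]
          simp
        · field_simp
      rw [hcompfun]
      exact hZ.mul_left _
    · intro m hm
      rw [if_neg ?_]
      intro hme
      obtain ⟨t, ht⟩ := hme
      exact hm ⟨t, by show 2*t = m; omega⟩
  -- the alternating sum as a combination
  have hE1 : HasSum (fun m : ℕ => 2 * (-1:ℝ)^(m+1) / (m:ℝ)^(2*(k+1)))
      (2 * ((-1 : ℝ) ^ (k + 1 + 1) * (2:ℝ) ^ (2 * (k+1) - 1) * π ^ (2 * (k+1)) *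
          ((bernoulli (2 * (k+1)) : ℚ) : ℝ) / (2 * (k+1)).factorial)
        - 4 * (((2:ℝ)^(2*(k+1)))⁻¹ * ((-1 : ℝ) ^ (k + 1 + 1) * (2:ℝ) ^ (2 * (k+1) - 1) * π ^ (2 * (k+1)) *
          ((bernoulli (2 * (k+1)) : ℚ) : ℝ) / (2 * (k+1)).factorial))) := by
    have hoddfun : (fun m : ℕ => 2 * (-1:ℝ)^(m+1) / (m:ℝ)^(2*(k+1)))
        = fun m : ℕ => 2 * (1/(m:ℝ)^(2*(k+1)))
            - 4 * (if Even m then 1/(m:ℝ)^(2*(k+1)) else 0) := by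
      funext m
      rcases Nat.even_or_odd m with he | ho
      · rw [if_pos he, (he.add_one).neg_one_pow]
        ring
      · rw [if_neg (by rwa [Nat.not_even_iff_odd]), (ho.add_one).neg_one_pow]
        ring
    rw [hoddfun]
    exact (hZ.mul_left 2).sub (hevens.mul_left 4)
  -- identify limits
  have hbddH : BddAbove (Set.range fun N => ZStarAux.H (k+1) N) :=
    ⟨π^2/3, by rintro x ⟨N, rfl⟩; exact ZStarAux.H_le' hn1 N⟩
  have hlimH : Filter.Tendsto (fun N => ZStarAux.H (k+1) N) Filter.atTop
      (nhds (⨆ N, ZStarAux.H (k+1) N)) :=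
    tendsto_atTop_ciSup (ZStarAux.H_mono (k+1)) hbddH
  have hlimC := ZStarAux.closed_tendsto (k+1) hn1
  have hHC : (fun N => ∑ m ∈ Icc 1 N, ZStarAux.c N m / (m:ℝ)^(2*(k+1)))
      = fun N => ZStarAux.H (k+1) N := by
    funext N; exact (ZStarAux.H_closed k N).symm
  rw [hHC] at hlimC
  have hsup : (⨆ N, ZStarAux.H (k+1) N)
      = ∑' m : ℕ, 2 * (-1:ℝ)^(m+1) / (m:ℝ)^(2*(k+1)) :=
    tendsto_nhds_unique hlimH hlimC
  have hmz : mzsv (fun _ : Fin (k+1) => (2:ℝ))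
      = ∑' m : ℕ, 2 * (-1:ℝ)^(m+1) / (m:ℝ)^(2*(k+1)) :=
    (ZStarAux.mzsv_eq (k+1) hn1).trans hsup
  have hfacR : (((2*(k+1)).factorial : ℕ) : ℝ) ≠ 0 :=
    Nat.cast_ne_zero.2 (Nat.factorial_ne_zero _)
  have h2p : (2:ℝ)^(2*(k+1)-1) = 2^(2*(k+1))/2 := by
    rw [eq_div_iff (two_ne_zero)]
    rw [← pow_succ]
    congr 1
  constructor
  · rw [hmz, hE1.tsum_eq, h2p]
    field_simp
    ring
  · rw [hmz, hE2.tsum_eq]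
    have heval : (Polynomial.map (algebraMap ℚ ℝ) (Polynomial.bernoulli (2*(k+1)))).eval ((1:ℝ)/2)
        = (((Polynomial.bernoulli (2*(k+1))).eval ((1:ℚ)/2) : ℚ) : ℝ) := by
      rw [show ((1:ℝ)/2) = algebraMap ℚ ℝ ((1:ℚ)/2) by rw [eq_ratCast]; norm_num]
      rw [Polynomial.eval_map, Polynomial.eval₂_at_apply, eq_ratCast]
    rw [heval]
    have hI : (2*(π:ℂ)*Complex.I)^(2*(k+1)) = ((2*π:ℝ):ℂ)^(2*(k+1)) * ((-1:ℂ))^(k+1) := by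
      rw [mul_pow, show Complex.I^(2*(k+1)) = (Complex.I^2)^(k+1) from pow_mul _ 2 (k+1),
        Complex.I_sq]
      push_cast
      ring
    rw [hI]
    have hfacC : (((2*(k+1)).factorial : ℕ) : ℂ) ≠ 0 :=
      Nat.cast_ne_zero.2 (Nat.factorial_ne_zero _)
    push_cast
    field_simp
    ring
end

section
/- For every positive integer n, ζ({4}^n) = 2^{2n+1} π^{4n} / (4n+2)!. -/
set_option maxHeartbeats 1000000

open Real Finset

section ZetaFourAuxSection

open Filter Topology

open Filter Topology


/-- The power series of `sin z * sinh z` (complex version). -/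
lemma zf_complex_hasSum_sin_mul_sinh (z : ℂ) :
    HasSum (fun j : ℕ => (-1) ^ j * 2 ^ (2 * j + 1) * z ^ (4 * j + 2) / ((4 * j + 2).factorial : ℂ))
      (Complex.sin z * Complex.sinh z) := by
  have hsinh : Complex.sin z * Complex.sinh z =
      (-Complex.I / 2) * (Complex.cos (z - z * Complex.I) - Complex.cos (z + z * Complex.I)) := by
    rw [Complex.cos_sub_cos]
    have h1 : (z - z * Complex.I + (z + z * Complex.I)) / 2 = z := by ring
    have h2 : (z - z * Complex.I - (z + z * Complex.I)) / 2 = -(z * Complex.I) := by ring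
    rw [h1, h2, Complex.sin_neg, Complex.sin_mul_I]
    ring_nf
    rw [Complex.I_sq]
    ring
  have h1 := (Complex.hasSum_cos (z - z * Complex.I)).sub (Complex.hasSum_cos (z + z * Complex.I))
  have h2 := h1.mul_left (-Complex.I / 2)
  rw [← hsinh] at h2
  have hinj : Function.Injective (fun j : ℕ => 2 * j + 1) := by
    intro a b h; simpa using h
  rw [← Function.Injective.hasSum_iff hinj] at h2
  · refine h2.congr_fun fun j => ?_
    show (-1:ℂ) ^ j * 2 ^ (2 * j + 1) * z ^ (4 * j + 2) / ((4 * j + 2).factorial : ℂ) =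
      -Complex.I / 2 * ((-1) ^ (2*j+1) * (z - z * Complex.I) ^ (2 * (2*j+1)) / ((2 * (2*j+1)).factorial : ℂ)
        - (-1) ^ (2*j+1) * (z + z * Complex.I) ^ (2 * (2*j+1)) / ((2 * (2*j+1)).factorial : ℂ))
    have e1 : (z - z * Complex.I) ^ (2 * (2*j+1)) = ((z - z * Complex.I) ^ 2) ^ (2*j+1) := by
      rw [← pow_mul]
    have e2 : (z + z * Complex.I) ^ (2 * (2*j+1)) = ((z + z * Complex.I) ^ 2) ^ (2*j+1) := by
      rw [← pow_mul]
    have s1 : (z - z * Complex.I) ^ 2 = -2 * Complex.I * z ^ 2 := by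
      have := Complex.I_sq; ring_nf; rw [Complex.I_sq]; ring
    have s2 : (z + z * Complex.I) ^ 2 = 2 * Complex.I * z ^ 2 := by
      ring_nf; rw [Complex.I_sq]; ring
    rw [e1, e2, s1, s2]
    have hfac : (2 * (2 * j + 1)) = 4 * j + 2 := by ring
    rw [hfac]
    have hI : Complex.I ^ (2 * j + 1) = (-1:ℂ)^j * Complex.I := by
      rw [pow_succ, pow_mul, Complex.I_sq]
    have expand : ((-2) * Complex.I * z ^ 2) ^ (2*j+1) = (-1:ℂ) * (2 * Complex.I * z^2) ^ (2*j+1) := by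
      rw [show ((-2) * Complex.I * z ^ 2) = -(2 * Complex.I * z^2) by ring, neg_pow]
      simp [pow_succ, pow_mul]
    rw [expand]
    rw [mul_pow, mul_pow, hI]
    rw [show ((-1:ℂ)) ^ (2*j+1) = -1 by rw [pow_succ, pow_mul]; simp]
    have : (z ^ 2) ^ (2 * j + 1) = z ^ (4 * j + 2) := by rw [← pow_mul]; ring_nf
    rw [this]
    field_simp
    ring_nf
    rw [Complex.I_sq]
    ring
  · intro m hm
    simp only [Set.mem_range, not_exists] at hm
    have hme : ∃ j, m = 2 * j := by
      rcases Nat.even_or_odd m with ⟨j, hj⟩ | ⟨j, hj⟩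
      · exact ⟨j, by omega⟩
      · exact absurd (by omega : 2 * j + 1 = m) (hm j)
    obtain ⟨j, rfl⟩ := hme
    have s1 : (z - z * Complex.I) ^ 2 = -(2 * Complex.I * z ^ 2) := by
      ring_nf; rw [Complex.I_sq]; ring
    have s2 : (z + z * Complex.I) ^ 2 = 2 * Complex.I * z ^ 2 := by
      ring_nf; rw [Complex.I_sq]; ring
    have e1 : (z - z * Complex.I) ^ (2 * (2*j)) = (2 * Complex.I * z ^ 2) ^ (2*j) := by
      rw [pow_mul, s1, neg_pow, Even.neg_one_pow ⟨j, by ring⟩, one_mul]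
    have e2 : (z + z * Complex.I) ^ (2 * (2*j)) = (2 * Complex.I * z ^ 2) ^ (2*j) := by
      rw [pow_mul, s2]
    simp only [e1, e2, sub_self, mul_zero]

/-- The power series of `sin y * sinh y` (real version). -/
lemma zf_real_hasSum_sinsinh (y : ℝ) :
    HasSum (fun j : ℕ => (-1) ^ j * 2 ^ (2 * j + 1) * y ^ (4 * j + 2) / ((4 * j + 2).factorial : ℝ))
      (Real.sin y * Real.sinh y) := by
  have h := zf_complex_hasSum_sin_mul_sinh (y : ℂ)
  rw [← Complex.ofReal_sin, ← Complex.ofReal_sinh, ← Complex.ofReal_mul] at h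
  exact Complex.hasSum_ofReal.mp (h.congr_fun fun j => by push_cast; ring)

/-- Euler product for sinh. -/
lemma zf_tendsto_euler_sinh_prod (x : ℝ) :
    Tendsto (fun K : ℕ => Real.pi * x * ∏ j ∈ Finset.range K, ((1 : ℝ) + x ^ 2 / ((j : ℝ) + 1) ^ 2))
      atTop (𝓝 (Real.sinh (Real.pi * x))) := by
  have h := Complex.tendsto_euler_sin_prod (x * Complex.I)
  have key : ∀ K : ℕ, (Real.pi : ℂ) * ((x : ℂ) * Complex.I) *
      ∏ j ∈ Finset.range K, ((1 : ℂ) - ((x : ℂ) * Complex.I) ^ 2 / ((j : ℂ) + 1) ^ 2) =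
      ((Real.pi * x * ∏ j ∈ Finset.range K, ((1 : ℝ) + x ^ 2 / ((j : ℝ) + 1) ^ 2) : ℝ) : ℂ) *
        Complex.I := by
    intro K
    have hterm : ∀ j : ℕ, (1 : ℂ) - ((x : ℂ) * Complex.I) ^ 2 / ((j : ℂ) + 1) ^ 2 =
        (((1 : ℝ) + x ^ 2 / ((j : ℝ) + 1) ^ 2 : ℝ) : ℂ) := by
      intro j
      push_cast
      rw [mul_pow, Complex.I_sq]
      ring
    rw [Finset.prod_congr rfl fun j _ => hterm j]
    push_cast
    ring
  simp only [key] at h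
  have hsin : Complex.sin ((Real.pi : ℂ) * ((x : ℂ) * Complex.I)) =
      ((Real.sinh (Real.pi * x) : ℝ) : ℂ) * Complex.I := by
    rw [show (Real.pi : ℂ) * ((x : ℂ) * Complex.I) = (((Real.pi * x : ℝ) : ℂ)) * Complex.I by
        push_cast; ring,
      Complex.sin_mul_I, Complex.ofReal_sinh]
  rw [hsin] at h
  have h2 := h.mul_const (-Complex.I)
  simp only [mul_assoc, Complex.I_mul_I] at h2
  have h3 : Tendsto (fun K : ℕ =>
      ((Real.pi * x * ∏ j ∈ Finset.range K, ((1 : ℝ) + x ^ 2 / ((j : ℝ) + 1) ^ 2) : ℝ) : ℂ))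
      atTop (𝓝 ((Real.sinh (Real.pi * x) : ℝ) : ℂ)) := by
    convert h2 using 2
    · simp [Complex.I_mul_I]; push_cast; ring
    · simp [Complex.I_mul_I]
  have h4 := (Complex.continuous_re.tendsto _).comp h3
  simpa only [Function.comp_def, Complex.ofReal_re] using h4

lemma zf_summable_prod_finset {c : ℕ → ℝ} (hc : ∀ k, 0 ≤ c k) (hs : Summable c) :
    Summable (fun t : Finset ℕ => ∏ k ∈ t, c k) := by
  apply summable_of_sum_le (c := Real.exp (∑' k, c k))
  · intro t
    exact Finset.prod_nonneg fun k _ => hc k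
  · intro u
    set K := (u.sup fun t => t.sup id) + 1 with hK
    have hsub : u ⊆ (Finset.range K).powerset := by
      intro t ht
      rw [Finset.mem_powerset]
      intro k hk
      rw [Finset.mem_range]
      calc k ≤ t.sup id := Finset.le_sup (f := id) hk
        _ ≤ u.sup fun t => t.sup id := Finset.le_sup ht
        _ < K := by omega
    calc ∑ t ∈ u, ∏ k ∈ t, c k ≤ ∑ t ∈ (Finset.range K).powerset, ∏ k ∈ t, c k := by
          apply Finset.sum_le_sum_of_subset_of_nonneg hsub
          intro t _ _
          exact Finset.prod_nonneg fun k _ => hc k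
      _ = ∏ j ∈ Finset.range K, (c j + 1) := by
          rw [Finset.prod_add]
          exact Finset.sum_congr rfl fun t _ => by simp
      _ ≤ ∏ j ∈ Finset.range K, Real.exp (c j) := by
          apply Finset.prod_le_prod
          · intro j _; have := hc j; linarith
          · intro j _; exact Real.add_one_le_exp (c j)
      _ = Real.exp (∑ j ∈ Finset.range K, c j) := (Real.exp_sum _ _).symm
      _ ≤ Real.exp (∑' k, c k) := by
          apply Real.exp_le_exp.2
          exact Summable.sum_le_tsum _ (fun k _ => hc k) hs

lemma zf_tendsto_powerset_range :
    Tendsto (fun K : ℕ => (Finset.range K).powerset) atTop atTop := by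
  apply tendsto_atTop_finset_of_monotone
  · intro a b hab
    exact Finset.powerset_mono.2 (Finset.range_subset_range.2 hab)
  · intro t
    refine ⟨t.sup id + 1, ?_⟩
    rw [Finset.mem_powerset]
    intro k hk
    rw [Finset.mem_range]
    have h := Finset.le_sup (f := id) hk
    simp only [id] at h
    omega

lemma zf_summable_one_div_four : Summable (fun k : ℕ => 1 / ((k : ℝ) + 1) ^ 4) := by
  have := (summable_nat_add_iff (f := fun k : ℕ => 1 / (k : ℝ) ^ 4) 1).2
    ((Real.summable_one_div_nat_pow (p := 4)).2 (by norm_num))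
  refine this.congr fun k => ?_
  push_cast
  ring_nf

lemma zf_abs_prodc (x : ℝ) (t : Finset ℕ) :
    |∏ k ∈ t, (-(x ^ 4) / ((k : ℝ) + 1) ^ 4)| = ∏ k ∈ t, (x ^ 4 / ((k : ℝ) + 1) ^ 4) := by
  rw [Finset.abs_prod]
  refine Finset.prod_congr rfl fun k _ => ?_
  rw [abs_div, abs_neg]
  congr 1
  · rw [abs_pow]
    rw [show |x| ^ 4 = x ^ 4 from by rw [← abs_pow]; exact abs_of_nonneg (by positivity)]
  · rw [abs_pow]
    exact congrArg (· ^ 4) (abs_of_nonneg (by positivity))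

lemma zf_summable_prodc (x : ℝ) :
    Summable (fun t : Finset ℕ => ∏ k ∈ t, (-(x ^ 4) / ((k : ℝ) + 1) ^ 4)) := by
  have hc'sum : Summable (fun k : ℕ => x ^ 4 / ((k : ℝ) + 1) ^ 4) := by
    have := zf_summable_one_div_four.mul_left (x ^ 4)
    refine this.congr fun k => ?_
    ring
  have hsumabs : Summable (fun t : Finset ℕ => |∏ k ∈ t, (-(x ^ 4) / ((k : ℝ) + 1) ^ 4)|) :=
    (zf_summable_prod_finset (fun k => by positivity) hc'sum).congr fun t => (zf_abs_prodc x t).symm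
  exact hsumabs.of_abs

/-- The infinite product identity: `π² x² ∏ (1 - x⁴/k⁴) = sin(πx) sinh(πx)`,
with the product expanded as a sum over finsets. -/
lemma zf_prod_eq_sinsinh (x : ℝ) :
    Real.pi ^ 2 * x ^ 2 * (∑' t : Finset ℕ, ∏ k ∈ t, (-(x ^ 4) / ((k : ℝ) + 1) ^ 4)) =
      Real.sin (Real.pi * x) * Real.sinh (Real.pi * x) := by
  set c : ℕ → ℝ := fun k => -(x ^ 4) / ((k : ℝ) + 1) ^ 4 with hc
  have hsum : Summable (fun t : Finset ℕ => ∏ k ∈ t, c k) := zf_summable_prodc x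
  set S := ∑' t : Finset ℕ, ∏ k ∈ t, c k with hS
  have h1 : Tendsto (fun K : ℕ => ∑ t ∈ (Finset.range K).powerset, ∏ k ∈ t, c k)
      atTop (𝓝 S) := hsum.hasSum.comp zf_tendsto_powerset_range
  have heq : ∀ K : ℕ, ∑ t ∈ (Finset.range K).powerset, ∏ k ∈ t, c k =
      ∏ j ∈ Finset.range K, (1 - x ^ 4 / ((j : ℝ) + 1) ^ 4) := by
    intro K
    have hpp : ∏ j ∈ Finset.range K, ((1:ℝ) - x ^ 4 / ((j : ℝ) + 1) ^ 4)
        = ∏ j ∈ Finset.range K, (c j + 1) :=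
      Finset.prod_congr rfl fun j _ => by rw [hc]; ring
    rw [hpp, Finset.prod_add]
    exact Finset.sum_congr rfl fun t _ => by simp
  rw [funext heq] at h1
  have h2 := h1.const_mul (Real.pi ^ 2 * x ^ 2)
  have h3 := (Real.tendsto_euler_sin_prod x).mul (zf_tendsto_euler_sinh_prod x)
  have heq2 : ∀ K : ℕ,
      (Real.pi * x * ∏ j ∈ Finset.range K, ((1 : ℝ) - x ^ 2 / ((j : ℝ) + 1) ^ 2)) *
      (Real.pi * x * ∏ j ∈ Finset.range K, ((1 : ℝ) + x ^ 2 / ((j : ℝ) + 1) ^ 2)) =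
      Real.pi ^ 2 * x ^ 2 * ∏ j ∈ Finset.range K, (1 - x ^ 4 / ((j : ℝ) + 1) ^ 4) := by
    intro K
    rw [show (Real.pi * x * ∏ j ∈ Finset.range K, ((1 : ℝ) - x ^ 2 / ((j : ℝ) + 1) ^ 2)) *
        (Real.pi * x * ∏ j ∈ Finset.range K, ((1 : ℝ) + x ^ 2 / ((j : ℝ) + 1) ^ 2)) =
        Real.pi ^ 2 * x ^ 2 * ((∏ j ∈ Finset.range K, ((1 : ℝ) - x ^ 2 / ((j : ℝ) + 1) ^ 2)) *
          ∏ j ∈ Finset.range K, ((1 : ℝ) + x ^ 2 / ((j : ℝ) + 1) ^ 2)) from by ring]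
    rw [← Finset.prod_mul_distrib]
    have hpp : ∏ j ∈ Finset.range K,
        (((1 : ℝ) - x ^ 2 / ((j : ℝ) + 1) ^ 2) * ((1 : ℝ) + x ^ 2 / ((j : ℝ) + 1) ^ 2))
        = ∏ j ∈ Finset.range K, ((1:ℝ) - x ^ 4 / ((j : ℝ) + 1) ^ 4) := by
      refine Finset.prod_congr rfl fun j _ => ?_
      have hj : ((j : ℝ) + 1) ≠ 0 := by positivity
      field_simp
      ring
    rw [hpp]
  rw [funext heq2] at h3
  exact tendsto_nhds_unique h2 h3

lemma zf_hasSum_card_fiber {c : ℕ → ℝ} (h : Summable (fun t : Finset ℕ => ∏ k ∈ t, c k)) :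
    HasSum (fun n : ℕ => ∑' t : {t : Finset ℕ // t.card = n}, ∏ k ∈ t.1, c k)
      (∑' t : Finset ℕ, ∏ k ∈ t, c k) := by
  have h1 := h.hasSum.tsum_fiberwise Finset.card
  refine HasSum.congr_fun h1 fun n => ?_
  exact ((Equiv.subtypeEquivRight (fun t => by simp)).tsum_eq
    (fun t : (Finset.card ⁻¹' {n} : Set (Finset ℕ)) => ∏ k ∈ t.1, c k)).symm

lemma zf_coeff_zero {c : ℕ → ℝ} (hs : Summable (fun n => |c n|))
    (h : ∀ t : ℝ, 0 < t → t ≤ 1 → HasSum (fun n => c n * t ^ n) 0) : ∀ n, c n = 0 := by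
  intro n
  induction n using Nat.strong_induction_on with
  | _ n ih =>
  have hM : Summable (fun k => |c (k + 1 + n)|) := by
    refine ((summable_nat_add_iff (1 + n)).2 hs).congr fun k => ?_
    rw [← add_assoc]
  set M := ∑' k, |c (k + 1 + n)| with hMdef
  have hM0 : 0 ≤ M := tsum_nonneg fun k => abs_nonneg _
  have key : ∀ t : ℝ, 0 < t → t ≤ 1 → |c n| ≤ t * M := by
    intro t ht ht1
    have h0 := h t ht ht1
    have hz : ∑ i ∈ Finset.range n, c i * t ^ i = 0 :=
      Finset.sum_eq_zero fun i hi => by rw [ih i (Finset.mem_range.1 hi)]; ring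
    have h1 : HasSum (fun k => c (k + n) * t ^ (k + n)) 0 := by
      rw [hasSum_nat_add_iff (f := fun m => c m * t ^ m) n, hz, add_zero]
      exact h0
    have htn : t ^ n ≠ 0 := pow_ne_zero _ ht.ne'
    have h2 : HasSum (fun k => c (k + n) * t ^ k) 0 := by
      have h2' := h1.div_const (t ^ n)
      rw [zero_div] at h2'
      refine h2'.congr_fun fun k => ?_
      rw [pow_add, ← mul_assoc, mul_div_assoc, div_self htn, mul_one]
    have h3 : HasSum (fun k => c (k + 1 + n) * t ^ (k + 1)) (-(c n * t ^ 0)) := by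
      rw [hasSum_nat_add_iff (f := fun m => c (m + n) * t ^ m) 1]
      simp only [Finset.range_one, Finset.sum_singleton, pow_zero, zero_add, mul_one]
      convert h2 using 1
      · rfl
      ring
    have hsummaj : Summable (fun k => |c (k + 1 + n)| * t) := hM.mul_right t
    have hbound : ∀ k, |c (k + 1 + n) * t ^ (k + 1)| ≤ |c (k + 1 + n)| * t := by
      intro k
      rw [abs_mul]
      apply mul_le_mul_of_nonneg_left _ (abs_nonneg _)
      rw [abs_pow, abs_of_nonneg ht.le]
      calc t ^ (k + 1) = t * t ^ k := by ring
        _ ≤ t * 1 := by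
            apply mul_le_mul_of_nonneg_left _ ht.le
            exact pow_le_one₀ ht.le ht1
        _ = t := mul_one t
    have hsumabs : Summable (fun k => |c (k + 1 + n) * t ^ (k + 1)|) :=
      Summable.of_nonneg_of_le (fun k => abs_nonneg _) hbound hsummaj
    have habs : |c n| = |∑' k, c (k + 1 + n) * t ^ (k + 1)| := by
      rw [h3.tsum_eq, abs_neg, pow_zero, mul_one]
    rw [habs]
    calc |∑' k, c (k + 1 + n) * t ^ (k + 1)| ≤ ∑' k, |c (k + 1 + n) * t ^ (k + 1)| := by
          have hnorm := norm_tsum_le_tsum_norm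
            (f := fun k => c (k + 1 + n) * t ^ (k + 1)) (by
              simpa only [Real.norm_eq_abs] using hsumabs)
          simpa only [Real.norm_eq_abs] using hnorm
      _ ≤ ∑' k, |c (k + 1 + n)| * t := Summable.tsum_le_tsum hbound hsumabs hsummaj
      _ = M * t := by rw [tsum_mul_right]
      _ = t * M := mul_comm _ _
  have htend : Tendsto (fun t : ℝ => t * M) (nhdsWithin 0 (Set.Ioi 0)) (𝓝 (0 * M)) :=
    ((continuous_id.mul continuous_const).tendsto 0).mono_left nhdsWithin_le_nhds
  rw [zero_mul] at htend
  have hev : ∀ᶠ t in nhdsWithin (0:ℝ) (Set.Ioi 0), |c n| ≤ t * M := by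
    filter_upwards [Ioo_mem_nhdsGT_of_mem (Set.mem_Ico.2 ⟨le_refl 0, zero_lt_one⟩)] with t ht
    exact key t ht.1 ht.2.le
  have hle := ge_of_tendsto htend hev
  exact abs_eq_zero.1 (le_antisymm hle (abs_nonneg _))



noncomputable def zfEfour (n : ℕ) : ℝ :=
  ∑' t : {t : Finset ℕ // t.card = n}, ∏ k ∈ t.1, (1 / ((k : ℝ) + 1) ^ 4)

lemma zf_rpow_neg_four (m : ℕ) : ((m : ℝ) + 1) ^ (-(4 : ℝ)) = 1 / ((m : ℝ) + 1) ^ 4 := by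
  have h : (0 : ℝ) < (m : ℝ) + 1 := by positivity
  rw [Real.rpow_neg h.le, one_div]
  congr 1
  rw [show (4 : ℝ) = ((4 : ℕ) : ℝ) by norm_num, Real.rpow_natCast]

lemma zf_mzv_eq_Efour (n : ℕ) : mzv (fun _ : Fin n => (4 : ℝ)) = zfEfour n := by
  classical
  set φ : {t : Finset ℕ // t.card = n} →
      {f : Fin n → ℕ // (∀ i, 1 ≤ f i) ∧ StrictMono f} := fun t =>
    ⟨fun i => t.1.orderEmbOfFin t.2 i + 1,
      fun i => Nat.succ_le_succ (Nat.zero_le _),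
      fun i j hij => by
        show t.1.orderEmbOfFin t.2 i + 1 < t.1.orderEmbOfFin t.2 j + 1
        have := (t.1.orderEmbOfFin t.2).strictMono hij
        omega⟩ with hφ
  have hbij : Function.Bijective φ := by
    constructor
    · intro t t' h
      have h1 : ∀ i, (t.1.orderEmbOfFin t.2) i = (t'.1.orderEmbOfFin t'.2) i := by
        intro i
        have := congrArg (fun f => f.1 i) h
        simpa [hφ] using this
      have h2 : Set.range (t.1.orderEmbOfFin t.2) = Set.range (t'.1.orderEmbOfFin t'.2) := by
        rw [funext h1]
      rw [Finset.range_orderEmbOfFin, Finset.range_orderEmbOfFin] at h2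
      exact Subtype.ext (Finset.coe_inj.1 h2)
    · rintro ⟨f, hf1, hfm⟩
      set g : Fin n → ℕ := fun i => f i - 1 with hg
      have hgm : StrictMono g := by
        intro i j hij
        have h1 := hfm hij
        have h2 := hf1 i
        simp only [hg]
        omega
      set t : Finset ℕ := Finset.image g Finset.univ with ht
      have htc : t.card = n := by
        rw [ht, Finset.card_image_of_injective _ hgm.injective, Finset.card_univ,
          Fintype.card_fin]
      have hmem : ∀ i, g i ∈ t := fun i => Finset.mem_image_of_mem g (Finset.mem_univ i)
      have huniq : g = t.orderEmbOfFin htc := Finset.orderEmbOfFin_unique htc hmem hgm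
      refine ⟨⟨t, htc⟩, ?_⟩
      apply Subtype.ext
      funext i
      show t.orderEmbOfFin htc i + 1 = f i
      rw [← huniq]
      have := hf1 i
      simp only [hg]
      omega
  have heq := Equiv.tsum_eq (Equiv.ofBijective φ hbij)
    (fun f : {f : Fin n → ℕ // (∀ i, 1 ≤ f i) ∧ StrictMono f} =>
      ∏ i, ((f.1 i : ℝ)) ^ (-(4 : ℝ)))
  rw [mzv, ← heq]
  apply tsum_congr
  intro t
  show ∏ i : Fin n, (((t.1.orderEmbOfFin t.2 i + 1 : ℕ) : ℝ)) ^ (-(4 : ℝ)) = _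
  have hterm : ∀ i : Fin n, (((t.1.orderEmbOfFin t.2 i + 1 : ℕ) : ℝ)) ^ (-(4 : ℝ)) =
      (fun a : {x // x ∈ t.1} => 1 / ((a.1 : ℝ) + 1) ^ 4) ((t.1.orderIsoOfFin t.2).toEquiv i) := by
    intro i
    have : ((t.1.orderIsoOfFin t.2).toEquiv i : ℕ) = t.1.orderEmbOfFin t.2 i :=
      Finset.coe_orderIsoOfFin_apply t.1 t.2 i
    show (((t.1.orderEmbOfFin t.2 i + 1 : ℕ) : ℝ)) ^ (-(4 : ℝ)) =
      1 / ((((t.1.orderIsoOfFin t.2).toEquiv i : ℕ) : ℝ) + 1) ^ 4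
    rw [this]
    push_cast
    exact zf_rpow_neg_four _
  rw [Finset.prod_congr rfl fun i _ => hterm i]
  calc ∏ i : Fin n,
        (fun a : {x // x ∈ t.1} => 1 / ((a.1 : ℝ) + 1) ^ 4) ((t.1.orderIsoOfFin t.2).toEquiv i)
      = ∏ a : {x // x ∈ t.1}, 1 / ((a.1 : ℝ) + 1) ^ 4 :=
        Equiv.prod_comp (t.1.orderIsoOfFin t.2).toEquiv
          (fun a : {x // x ∈ t.1} => 1 / ((a.1 : ℝ) + 1) ^ 4)
    _ = ∏ k ∈ t.1, 1 / ((k : ℝ) + 1) ^ 4 :=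
        Finset.prod_coe_sort t.1 (fun k : ℕ => 1 / ((k : ℝ) + 1) ^ 4)

lemma zf_Efour_nonneg (n : ℕ) : 0 ≤ zfEfour n :=
  tsum_nonneg fun t => Finset.prod_nonneg fun k _ => by positivity

lemma zf_summable_Efour : Summable zfEfour := by
  refine ((zf_hasSum_card_fiber (c := fun k : ℕ => 1 / ((k : ℝ) + 1) ^ 4)
    (zf_summable_prod_finset (fun k => by positivity) zf_summable_one_div_four)).summable).congr
    fun n => ?_
  rw [zfEfour]

lemma zf_hasSum_main (x : ℝ) :
    HasSum (fun m : ℕ => (-(x ^ 4)) ^ m * zfEfour m)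
      (∑' t : Finset ℕ, ∏ k ∈ t, (-(x ^ 4) / ((k : ℝ) + 1) ^ 4)) := by
  have h := zf_hasSum_card_fiber (c := fun k : ℕ => -(x ^ 4) / ((k : ℝ) + 1) ^ 4)
    (zf_summable_prodc x)
  refine HasSum.congr_fun h fun m => ?_
  rw [zfEfour, ← tsum_mul_left]
  refine tsum_congr fun t => ?_
  symm
  have hstep : ∀ k : ℕ, -(x ^ 4) / ((k : ℝ) + 1) ^ 4 = (-(x ^ 4)) * (1 / ((k : ℝ) + 1) ^ 4) :=
    fun k => by ring
  rw [Finset.prod_congr rfl fun k _ => hstep k, Finset.prod_mul_distrib, Finset.prod_const, t.2]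

lemma zf_hfact : Summable (fun m : ℕ =>
    2 ^ (2 * m + 1) * Real.pi ^ (4 * m + 2) / (((4 * m + 2).factorial : ℝ))) := by
  have hinj : Function.Injective (fun m : ℕ => 4 * m + 2) := fun a b h => by
    simpa using h
  have h := (Real.summable_pow_div_factorial (Real.sqrt 2 * Real.pi)).comp_injective hinj
  refine h.congr fun m => ?_
  show (Real.sqrt 2 * Real.pi) ^ (4 * m + 2) / (((4 * m + 2).factorial : ℝ)) = _
  congr 1
  rw [mul_pow]
  congr 1
  rw [show 4 * m + 2 = 2 * (2 * m + 1) by ring, pow_mul, Real.sq_sqrt (by norm_num : (0:ℝ) ≤ 2)]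
end ZetaFourAuxSection

/-- `ζ({4}^n) = 2^{2n+1} π^{4n}/(4n+2)!`. -/
theorem zeta_four_rep (n : ℕ) (hn : 1 ≤ n) :
    mzv (fun _ : Fin n => (4 : ℝ)) =
      2 ^ (2 * n + 1) * π ^ (4 * n) / (Nat.factorial (4 * n + 2)) := by
  rw [zf_mzv_eq_Efour n]
  set cser : ℕ → ℝ := fun m => (-1) ^ m * Real.pi ^ 2 * zfEfour m -
      (-1) ^ m * (2 ^ (2 * m + 1) * Real.pi ^ (4 * m + 2) / (((4 * m + 2).factorial : ℝ)))
    with hcser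
  have hsabs : Summable (fun m => |cser m|) := by
    have hmaj := (zf_summable_Efour.mul_left (Real.pi ^ 2)).add zf_hfact
    refine Summable.of_nonneg_of_le (fun m => abs_nonneg _) (fun m => ?_) hmaj
    have e1 : |(-1:ℝ) ^ m * Real.pi ^ 2 * zfEfour m| = Real.pi ^ 2 * zfEfour m := by
      rw [abs_mul, abs_mul, abs_pow, abs_neg, abs_one, one_pow, one_mul,
        abs_of_nonneg (by positivity : (0:ℝ) ≤ Real.pi ^ 2), abs_of_nonneg (zf_Efour_nonneg m)]
    have e2 : |(-1:ℝ) ^ m * (2 ^ (2 * m + 1) * Real.pi ^ (4 * m + 2) /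
        (((4 * m + 2).factorial : ℝ)))| =
        2 ^ (2 * m + 1) * Real.pi ^ (4 * m + 2) / (((4 * m + 2).factorial : ℝ)) := by
      rw [abs_mul, abs_pow, abs_neg, abs_one, one_pow, one_mul, abs_of_nonneg (by positivity)]
    calc |cser m| ≤ |(-1:ℝ) ^ m * Real.pi ^ 2 * zfEfour m| +
          |(-1:ℝ) ^ m * (2 ^ (2 * m + 1) * Real.pi ^ (4 * m + 2) /
            (((4 * m + 2).factorial : ℝ)))| := abs_sub _ _
      _ = Real.pi ^ 2 * zfEfour m +
          2 ^ (2 * m + 1) * Real.pi ^ (4 * m + 2) / (((4 * m + 2).factorial : ℝ)) := by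
          rw [e1, e2]
  have h0 : ∀ t : ℝ, 0 < t → t ≤ 1 → HasSum (fun m => cser m * t ^ m) 0 := by
    intro t ht ht1
    set x : ℝ := t ^ ((4 : ℝ)⁻¹) with hx
    have hx0 : 0 < x := Real.rpow_pos_of_pos ht _
    have hx4 : x ^ (4 : ℕ) = t := by
      rw [hx, ← Real.rpow_natCast (t ^ ((4 : ℝ)⁻¹)) 4, ← Real.rpow_mul ht.le]
      norm_num
    have hA := zf_hasSum_main x
    have hA2 := hA.mul_left (Real.pi ^ 2 * x ^ 2)
    rw [zf_prod_eq_sinsinh x] at hA2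
    have hB := zf_real_hasSum_sinsinh (Real.pi * x)
    have hC := hA2.sub hB
    rw [sub_self] at hC
    have hD : HasSum (fun m => x ^ 2 * (cser m * t ^ m)) 0 := by
      refine hC.congr_fun fun m => ?_
      have hneg : (-(x ^ (4 : ℕ))) ^ m = (-1 : ℝ) ^ m * t ^ m := by
        rw [hx4, neg_pow]
      have hxm : x ^ (4 * m + 2) = t ^ m * x ^ 2 := by
        rw [pow_add, pow_mul, hx4]
      rw [hcser, hneg, mul_pow Real.pi x (4 * m + 2), hxm]
      field_simp
    have hx2 : (x : ℝ) ^ 2 ≠ 0 := pow_ne_zero _ hx0.ne'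
    have hE := hD.mul_left ((x ^ 2)⁻¹)
    rw [mul_zero] at hE
    refine hE.congr_fun fun m => ?_
    rw [← mul_assoc, inv_mul_cancel₀ hx2, one_mul]
  have hall := zf_coeff_zero hsabs h0 n
  rw [hcser] at hall
  have hne : ((-1 : ℝ)) ^ n ≠ 0 := pow_ne_zero _ (by norm_num)
  have h1 : Real.pi ^ 2 * zfEfour n =
      2 ^ (2 * n + 1) * Real.pi ^ (4 * n + 2) / (((4 * n + 2).factorial : ℝ)) := by
    have hsub := sub_eq_zero.1 hall
    have h2 : (-1 : ℝ) ^ n * (Real.pi ^ 2 * zfEfour n) =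
        (-1 : ℝ) ^ n * (2 ^ (2 * n + 1) * Real.pi ^ (4 * n + 2) /
          (((4 * n + 2).factorial : ℝ))) := by
      rw [← mul_assoc]
      exact hsub
    exact mul_left_cancel₀ hne h2
  have h3 : zfEfour n * Real.pi ^ 2 =
      (2 ^ (2 * n + 1) * Real.pi ^ (4 * n) / ((Nat.factorial (4 * n + 2) : ℝ))) *
        Real.pi ^ 2 := by
    calc zfEfour n * Real.pi ^ 2 = Real.pi ^ 2 * zfEfour n := mul_comm _ _
      _ = 2 ^ (2 * n + 1) * Real.pi ^ (4 * n + 2) / (((4 * n + 2).factorial : ℝ)) := h1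
      _ = (2 ^ (2 * n + 1) * Real.pi ^ (4 * n) / ((Nat.factorial (4 * n + 2) : ℝ))) *
          Real.pi ^ 2 := by
          rw [pow_add]
          ring
  exact mul_right_cancel₀ (pow_ne_zero 2 Real.pi_ne_zero) h3
end

section
/- For every positive integer n, ζ({8}^n) = (2^{4n+1} π^{8n} / (8n+4)!) · ( (2 cos(π/8))^{8n+4} + (2 sin(π/8))^{8n+4} ). -/
open Real Finset

open Filter Topology

noncomputable def zb (k : ℕ) : ℝ := (((k:ℝ)+1)^8)⁻¹

lemma zb_nonneg (k : ℕ) : 0 ≤ zb k := by unfold zb; positivity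

lemma zb_summable : Summable zb := by
  have : Summable (fun k : ℕ => (((k:ℝ)+1)^8)⁻¹) := by
    have := (summable_nat_add_iff (f := fun k : ℕ => ((k:ℝ)^8)⁻¹) 1).2 ?_
    · exact this.congr (by intro k; push_cast; ring_nf)
    · simp only [← Real.rpow_natCast]
      exact Real.summable_nat_rpow_inv.2 (by norm_num)
  exact this

lemma sum_powerset_eq (x : ℝ) (N : ℕ) :
    ∑ t ∈ (range N).powerset, x ^ t.card * ∏ k ∈ t, zb k
      = ∏ k ∈ range N, (1 + x * zb k) := by
  have : ∏ k ∈ range N, (1 + x * zb k) = ∏ k ∈ range N, (x * zb k + 1) := by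
    exact Finset.prod_congr rfl fun k _ => by ring
  rw [this, Finset.prod_add]
  refine Finset.sum_congr rfl fun t ht => ?_
  rw [Finset.prod_const_one, mul_one, Finset.prod_mul_distrib, Finset.prod_const]

lemma prod_le_exp (N : ℕ) : ∏ k ∈ range N, (1 + zb k) ≤ Real.exp (∑' k, zb k) := by
  calc ∏ k ∈ range N, (1 + zb k) ≤ ∏ k ∈ range N, Real.exp (zb k) := by
        refine Finset.prod_le_prod (fun k _ => by have := zb_nonneg k; positivity) (fun k _ => ?_)
        rw [add_comm]; exact Real.add_one_le_exp (zb k)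
    _ = Real.exp (∑ k ∈ range N, zb k) := by rw [← Real.exp_sum]
    _ ≤ Real.exp (∑' k, zb k) := by
        apply Real.exp_le_exp.2
        exact zb_summable.sum_le_tsum _ (fun k _ => zb_nonneg k)

lemma fin_summable : Summable (fun s : Finset ℕ => ∏ k ∈ s, zb k) := by
  apply summable_of_sum_le (fun s => Finset.prod_nonneg fun k _ => zb_nonneg k)
  intro u
  set N := (u.sup fun s => s.sup id) + 1 with hN
  have hsub : u ⊆ (range N).powerset := by
    intro s hs
    simp only [Finset.mem_powerset]
    intro k hk
    simp only [Finset.mem_range, hN]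
    have h1 : s.sup id ≤ u.sup fun s => s.sup id := Finset.le_sup (f := fun s => s.sup id) hs
    have h2 : k ≤ s.sup id := Finset.le_sup (f := id) hk
    omega
  calc ∑ s ∈ u, ∏ k ∈ s, zb k ≤ ∑ s ∈ (range N).powerset, ∏ k ∈ s, zb k := by
        exact Finset.sum_le_sum_of_subset_of_nonneg hsub
          (fun s _ _ => Finset.prod_nonneg fun k _ => zb_nonneg k)
    _ = ∏ k ∈ range N, (1 + 1 * zb k) := by
        rw [← sum_powerset_eq 1 N]; simp
    _ ≤ Real.exp (∑' k, zb k) := by simpa using prod_le_exp N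

noncomputable def esum (n : ℕ) : ℝ := ∑' s : {s : Finset ℕ // s.card = n}, ∏ k ∈ s.1, zb k

lemma summable_P (x : ℝ) (hx : |x| ≤ 1) :
    Summable (fun s : Finset ℕ => x ^ s.card * ∏ k ∈ s, zb k) := by
  apply Summable.of_norm_bounded fin_summable
  intro s
  rw [norm_mul, norm_pow]
  calc ‖x‖ ^ s.card * ‖∏ k ∈ s, zb k‖ ≤ 1 ^ s.card * ‖∏ k ∈ s, zb k‖ := by
        apply mul_le_mul_of_nonneg_right (pow_le_pow_left₀ (norm_nonneg x) ?_ _) (norm_nonneg _)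
        simpa using hx
    _ = ∏ k ∈ s, zb k := by
        rw [one_pow, one_mul, Real.norm_eq_abs,
          abs_of_nonneg (Finset.prod_nonneg fun k _ => zb_nonneg k)]

lemma summable_esub (n : ℕ) :
    Summable (fun s : {s : Finset ℕ // s.card = n} => ∏ k ∈ s.1, zb k) :=
  fin_summable.subtype _

lemma esum_nonneg (n : ℕ) : 0 ≤ esum n :=
  tsum_nonneg fun s => Finset.prod_nonneg fun k _ => zb_nonneg k

lemma esum_le (n : ℕ) : esum n ≤ ∑' s : Finset ℕ, ∏ k ∈ s, zb k := by
  rw [esum]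
  refine le_trans
    (le_of_eq (_root_.tsum_subtype {s : Finset ℕ | s.card = n} (fun s => ∏ k ∈ s, zb k)))
    ((fin_summable.indicator _).tsum_le_tsum
      (Set.indicator_le_self' (fun s _ => Finset.prod_nonneg fun k _ => zb_nonneg k))
      fin_summable)

lemma hasSum_fiber (x : ℝ) (n : ℕ) :
    HasSum (fun s : {s : Finset ℕ // s.card = n} => x ^ s.1.card * ∏ k ∈ s.1, zb k)
      (x ^ n * esum n) := by
  have h := ((summable_esub n).hasSum).mul_left (x ^ n)
  have he : (fun s : {s : Finset ℕ // s.card = n} => x ^ s.1.card * ∏ k ∈ s.1, zb k)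
      = fun s => x ^ n * ∏ k ∈ s.1, zb k := funext fun s => by rw [s.2]
  rw [he]
  exact h

lemma hasSum_T (x : ℝ) (hx : |x| ≤ 1) :
    HasSum (fun n : ℕ => x ^ n * esum n)
      (∑' s : Finset ℕ, x ^ s.card * ∏ k ∈ s, zb k) := by
  have h := (summable_P x hx).hasSum
  exact HasSum.sigma ((Equiv.sigmaFiberEquiv Finset.card).hasSum_iff.2 h)
    (fun n => hasSum_fiber x n)

lemma tendsto_prod_esum (x : ℝ) (hx : |x| ≤ 1) :
    Tendsto (fun N => ∏ k ∈ range N, (1 + x * zb k)) atTop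
      (𝓝 (∑' n : ℕ, x ^ n * esum n)) := by
  have h := (summable_P x hx).hasSum
  have hmap : Tendsto (fun N : ℕ => (range N).powerset) atTop atTop := by
    apply tendsto_atTop_finset_of_monotone
    · intro a b hab
      exact Finset.powerset_mono.2 (Finset.range_subset_range.2 hab)
    · intro s
      refine ⟨s.sup id + 1, Finset.mem_powerset.2 fun k hk => Finset.mem_range.2 ?_⟩
      have := Finset.le_sup (f := id) hk
      simp only [id_eq] at this
      omega
  have h2 := h.comp hmap
  rw [(hasSum_T x hx).tsum_eq]
  simpa only [Function.comp_def, sum_powerset_eq] using h2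


lemma image_orderEmbOfFin {n : ℕ} (s : Finset ℕ) (h : s.card = n) :
    Finset.image (s.orderEmbOfFin h) Finset.univ = s := by
  apply Finset.eq_of_subset_of_card_le
  · intro k hk
    obtain ⟨i, _, rfl⟩ := Finset.mem_image.1 hk
    exact Finset.orderEmbOfFin_mem s h i
  · rw [Finset.card_image_of_injective _ (s.orderEmbOfFin h).injective,
      Finset.card_univ, Fintype.card_fin, h]

noncomputable def finsetEquiv (n : ℕ) :
    {s : Finset ℕ // s.card = n} ≃ {f : Fin n → ℕ // (∀ i, 1 ≤ f i) ∧ StrictMono f} where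
  toFun s := ⟨fun i => s.1.orderEmbOfFin s.2 i + 1,
    fun i => Nat.le_add_left 1 _,
    fun i j hij => by
      have := (s.1.orderEmbOfFin s.2).strictMono hij
      exact Nat.add_lt_add_right this 1⟩
  invFun f := ⟨Finset.image (fun i => f.1 i - 1) Finset.univ, by
    rw [Finset.card_image_of_injective, Finset.card_univ, Fintype.card_fin]
    intro i j hij
    have hij' : f.1 i - 1 = f.1 j - 1 := hij
    have h1 := f.2.1 i
    have h2 := f.2.1 j
    exact f.2.2.injective (by omega)⟩
  left_inv s := by
    apply Subtype.ext
    simp only [Nat.add_sub_cancel]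
    exact image_orderEmbOfFin s.1 s.2
  right_inv f := by
    apply Subtype.ext
    funext i
    have hmono : StrictMono (fun i => f.1 i - 1) := by
      intro a b hab
      show f.1 a - 1 < f.1 b - 1
      have h1 := f.2.1 a
      have := f.2.2 hab
      omega
    have hmem : ∀ i, (fun i => f.1 i - 1) i ∈ Finset.image (fun i => f.1 i - 1) Finset.univ :=
      fun i => Finset.mem_image_of_mem _ (Finset.mem_univ i)
    have := Finset.orderEmbOfFin_unique
      (s := Finset.image (fun i => f.1 i - 1) Finset.univ) (f := fun i => f.1 i - 1)
      (by rw [Finset.card_image_of_injective _ hmono.injective, Finset.card_univ,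
          Fintype.card_fin]) hmem hmono
    have hi := congrFun this i
    simp only at hi ⊢
    rw [← hi]
    have := f.2.1 i
    omega

lemma mzv_eq_esum (n : ℕ) : mzv (fun _ : Fin n => (8 : ℝ)) = esum n := by
  rw [mzv, ← Equiv.tsum_eq (finsetEquiv n), esum]
  refine tsum_congr fun s => ?_
  have hterm : ∀ i : Fin n,
      (((finsetEquiv n s).1 i : ℝ)) ^ (-(8:ℝ)) = zb (s.1.orderEmbOfFin s.2 i) := by
    intro i
    have : ((finsetEquiv n s).1 i : ℝ) = ((s.1.orderEmbOfFin s.2 i : ℕ) : ℝ) + 1 := by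
      simp [finsetEquiv]
    rw [this, zb]
    rw [show (-(8:ℝ)) = ((-8 : ℤ) : ℝ) by norm_num,
      Real.rpow_intCast]
    rw [zpow_neg, show ((8:ℤ)) = ((8:ℕ):ℤ) from rfl, zpow_natCast]
  rw [Finset.prod_congr rfl (fun i _ => hterm i)]
  have hinj : ∀ x ∈ Finset.univ, ∀ y ∈ Finset.univ,
      s.1.orderEmbOfFin s.2 x = s.1.orderEmbOfFin s.2 y → x = y :=
    fun x _ y _ h => (s.1.orderEmbOfFin s.2).injective h
  calc ∏ i : Fin n, zb (s.1.orderEmbOfFin s.2 i)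
      = ∏ k ∈ Finset.image (s.1.orderEmbOfFin s.2) Finset.univ, zb k :=
        (Finset.prod_image hinj).symm
    _ = ∏ k ∈ s.1, zb k := by rw [image_orderEmbOfFin s.1 s.2]

lemma shift_summable {d : ℕ → ℂ} {δ : ℝ} (hδ : 0 < δ)
    (hd : Summable fun j => ‖d j‖ * δ ^ j) (m : ℕ) :
    Summable fun k => ‖d (k + m)‖ * δ ^ k := by
  have h1 : Summable fun k => ‖d (k + m)‖ * δ ^ (k + m) := by
    have := hd.comp_injective (i := fun k : ℕ => k + m)
      (fun a b hab => by have : a + m = b + m := hab; omega)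
    simpa [Function.comp_def] using this
  apply (h1.mul_left ((δ ^ m)⁻¹)).congr
  intro k
  rw [pow_add]
  field_simp

lemma shift_summable' {d : ℕ → ℂ} {δ : ℝ} (hδ : 0 < δ)
    (hd : Summable fun j => ‖d j‖ * δ ^ j) (m : ℕ) {t : ℝ} (ht : 0 ≤ t) (htδ : t ≤ δ) :
    Summable fun k => ‖d (k + m)‖ * t ^ k := by
  apply Summable.of_nonneg_of_le (fun k => by positivity) (fun k => ?_)
    (shift_summable hδ hd m)
  exact mul_le_mul_of_nonneg_left (pow_le_pow_left₀ ht htδ k) (norm_nonneg _)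

lemma coeff_unique {f g : ℕ → ℂ} {δ : ℝ} (hδ : 0 < δ)
    (hf : Summable (fun j => ‖f j‖ * δ ^ j)) (hg : Summable (fun j => ‖g j‖ * δ ^ j))
    (h : ∀ t : ℝ, 0 < t → t < δ → ∑' j, f j * (t : ℂ) ^ j = ∑' j, g j * (t : ℂ) ^ j) :
    ∀ j, f j = g j := by
  set d : ℕ → ℂ := fun j => f j - g j with hd_def
  have hd : Summable (fun j => ‖d j‖ * δ ^ j) := by
    apply Summable.of_nonneg_of_le (fun j => by positivity)
      (fun j => ?_) (hf.add hg)
    have : ‖d j‖ ≤ ‖f j‖ + ‖g j‖ := norm_sub_le _ _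
    have hp : (0:ℝ) ≤ δ ^ j := by positivity
    nlinarith
  have hsumf : ∀ (u : ℕ → ℂ), Summable (fun j => ‖u j‖ * δ ^ j) →
      ∀ t : ℝ, 0 ≤ t → t ≤ δ → Summable (fun j => u j * (t : ℂ) ^ j) := by
    intro u hu t ht htδ
    apply Summable.of_norm_bounded hu
    intro j
    rw [norm_mul, norm_pow, Complex.norm_real, Real.norm_eq_abs, abs_of_nonneg ht]
    exact mul_le_mul_of_nonneg_left (pow_le_pow_left₀ ht htδ j) (norm_nonneg _)
  have hzero : ∀ t : ℝ, 0 < t → t < δ → ∑' j, d j * (t : ℂ) ^ j = 0 := by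
    intro t ht htδ
    rw [hd_def]
    simp only [sub_mul]
    rw [(hsumf f hf t ht.le htδ.le).tsum_sub (hsumf g hg t ht.le htδ.le),
      h t ht htδ, sub_self]
  suffices H : ∀ n, d n = 0 by
    intro j
    have := H j
    rw [hd_def] at this
    simpa [sub_eq_zero] using this
  intro n
  induction n using Nat.strong_induction_on with
  | _ n ih =>
  have hdsum : ∀ t : ℝ, 0 ≤ t → t ≤ δ → Summable (fun j => d j * (t : ℂ) ^ j) :=
    hsumf d hd
  have htail : ∀ t : ℝ, 0 < t → t < δ → ∑' k, d (k + n) * (t : ℂ) ^ k = 0 := by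
    intro t ht htδ
    have h1 := (hdsum t ht.le htδ.le).sum_add_tsum_nat_add n
    rw [hzero t ht htδ] at h1
    have h2 : ∑ i ∈ range n, d i * (t : ℂ) ^ i = 0 := by
      apply Finset.sum_eq_zero
      intro i hi
      rw [ih i (Finset.mem_range.1 hi), zero_mul]
    rw [h2, zero_add] at h1
    have h3 : (fun k => d (k + n) * (t : ℂ) ^ (k + n))
        = fun k => (t : ℂ) ^ n * (d (k + n) * (t : ℂ) ^ k) := by
      funext k; rw [pow_add]; ring
    rw [h3, tsum_mul_left] at h1
    have htn : ((t : ℂ)) ^ n ≠ 0 := pow_ne_zero _ (by exact_mod_cast ht.ne')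
    exact (mul_eq_zero.1 h1).resolve_left htn
  have hMsum : Summable (fun k => ‖d (k + 1 + n)‖ * (δ / 2) ^ k) := by
    have := shift_summable' hδ hd (1 + n) (t := δ / 2) (by linarith) (by linarith)
    apply this.congr
    intro k
    have he : k + (1 + n) = k + 1 + n := by omega
    rw [he]
  set M := ∑' k, ‖d (k + 1 + n)‖ * (δ / 2) ^ k with hM_def
  have hM0 : 0 ≤ M := tsum_nonneg (fun k => by positivity)
  have key : ∀ t : ℝ, 0 < t → t ≤ δ / 2 → ‖d n‖ ≤ t * M := by
    intro t ht htδ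
    have htδ' : t < δ := by linarith
    have hsummab : Summable (fun k => d (k + n) * (t : ℂ) ^ k) := by
      apply Summable.of_norm_bounded (shift_summable' hδ hd n ht.le htδ'.le)
      intro k
      rw [norm_mul, norm_pow, Complex.norm_real, Real.norm_eq_abs, abs_of_nonneg ht.le]
    have h1 := hsummab.sum_add_tsum_nat_add 1
    rw [htail t ht htδ'] at h1
    simp only [Finset.range_one, Finset.sum_singleton, pow_zero, mul_one, zero_add] at h1
    have h2 : d n = -∑' k, d (k + 1 + n) * (t : ℂ) ^ (k + 1) := by
      linear_combination h1
    rw [h2, norm_neg]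
    have hbound : ∀ k, ‖d (k + 1 + n) * (t : ℂ) ^ (k + 1)‖
        ≤ t * (‖d (k + 1 + n)‖ * (δ / 2) ^ k) := by
      intro k
      rw [norm_mul, norm_pow, Complex.norm_real, Real.norm_eq_abs, abs_of_nonneg ht.le,
        pow_succ']
      have hb : ‖d (k+1+n)‖ * t ^ k ≤ ‖d (k+1+n)‖ * (δ/2) ^ k :=
        mul_le_mul_of_nonneg_left (pow_le_pow_left₀ ht.le htδ k) (norm_nonneg _)
      calc ‖d (k+1+n)‖ * (t * t ^ k) = t * (‖d (k+1+n)‖ * t ^ k) := by ring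
        _ ≤ t * (‖d (k+1+n)‖ * (δ/2) ^ k) := mul_le_mul_of_nonneg_left hb ht.le
    have hsum2 : Summable (fun k => ‖d (k + 1 + n) * (t : ℂ) ^ (k + 1)‖) := by
      apply Summable.of_nonneg_of_le (fun k => norm_nonneg _) hbound (hMsum.mul_left t)
    calc ‖∑' k, d (k + 1 + n) * (t : ℂ) ^ (k + 1)‖
        ≤ ∑' k, ‖d (k + 1 + n) * (t : ℂ) ^ (k + 1)‖ := norm_tsum_le_tsum_norm hsum2
      _ ≤ ∑' k, t * (‖d (k + 1 + n)‖ * (δ / 2) ^ k) :=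
          hsum2.tsum_le_tsum hbound (hMsum.mul_left t)
      _ = t * M := by rw [tsum_mul_left]
  have hdn : ‖d n‖ ≤ 0 := by
    by_contra hc
    push_neg at hc
    have hM1 : (0:ℝ) < 2 * (M + 1) := by linarith
    have ht : 0 < min (δ / 2) (‖d n‖ / (2 * (M + 1))) :=
      lt_min (by linarith) (div_pos hc hM1)
    have h1 := key _ ht (min_le_left _ _)
    have h2 : min (δ / 2) (‖d n‖ / (2 * (M + 1))) * M ≤ (‖d n‖ / (2 * (M + 1))) * M :=
      mul_le_mul_of_nonneg_right (min_le_right _ _) hM0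
    have h3 : (‖d n‖ / (2 * (M + 1))) * M < ‖d n‖ := by
      rw [div_mul_eq_mul_div, div_lt_iff₀ hM1]
      nlinarith
    linarith
  exact norm_le_zero_iff.1 hdn

noncomputable def qC : ℂ := (Real.sqrt 2 : ℝ)

lemma hq2 : qC ^ 2 = 2 := by
  rw [qC, ← Complex.ofReal_pow, Real.sq_sqrt (by norm_num : (0:ℝ) ≤ 2)]
  norm_num

lemma hq0 : qC ≠ 0 := by
  intro h
  have := hq2
  rw [h] at this
  norm_num at this

noncomputable def ee1 : ℂ := (1 + Complex.I) / qC
noncomputable def ee3 : ℂ := (-1 + Complex.I) / qC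

lemma ee1_sq : ee1 ^ 2 = Complex.I := by
  rw [ee1, div_pow, hq2]
  have : (1 + Complex.I) ^ 2 = 2 * Complex.I := by
    linear_combination Complex.I_sq
  rw [this]
  ring
lemma ee3_sq : ee3 ^ 2 = -Complex.I := by
  rw [ee3, div_pow, hq2]
  have : (-1 + Complex.I) ^ 2 = -(2 * Complex.I) := by
    linear_combination Complex.I_sq
  rw [this]
  ring

lemma quad (a : ℂ) :
    (1 - a) * (1 - Complex.I ^ 2 * a) * (1 - Complex.I * a) * (1 - -Complex.I * a)
      = 1 - a ^ 4 := by
  linear_combination ((1 - a) * (-a - a ^ 2 + (Complex.I ^ 2 - 1) * a ^ 3)) * Complex.I_sq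

noncomputable def sinprod (t : ℝ) : ℂ :=
  Complex.sin (π * t) * Complex.sin (π * (Complex.I * t)) *
    Complex.sin (π * (ee1 * t)) * Complex.sin (π * (ee3 * t))

lemma euler_combined (t : ℝ) (ht : 0 < t) :
    Tendsto (fun N => ∏ j ∈ range N, ((1 : ℂ) - (t : ℂ) ^ 8 / ((j : ℂ) + 1) ^ 8)) atTop
      (𝓝 (((-Complex.I) * (π : ℂ) ^ 4 * (t : ℂ) ^ 4)⁻¹ * sinprod t)) := by
  have h1 := Complex.tendsto_euler_sin_prod (t : ℂ)
  have h2 := Complex.tendsto_euler_sin_prod (Complex.I * t)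
  have h3 := Complex.tendsto_euler_sin_prod (ee1 * t)
  have h4 := Complex.tendsto_euler_sin_prod (ee3 * t)
  have hmul := ((h1.mul h2).mul h3).mul h4
  set c0 : ℂ := (-Complex.I) * (π : ℂ) ^ 4 * (t : ℂ) ^ 4 with hc0_def
  have hc0 : c0 ≠ 0 := by
    apply mul_ne_zero (mul_ne_zero _ _)
    · exact pow_ne_zero _ (by exact_mod_cast ht.ne')
    · simpa using Complex.I_ne_zero
    · exact pow_ne_zero _ (by exact_mod_cast Real.pi_ne_zero)
  have key : ∀ N : ℕ,
      (π * (t:ℂ) * ∏ j ∈ range N, (1 - (t:ℂ) ^ 2 / ((j:ℂ) + 1) ^ 2)) *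
        (π * (Complex.I * t) * ∏ j ∈ range N, (1 - (Complex.I * t) ^ 2 / ((j:ℂ) + 1) ^ 2)) *
        (π * (ee1 * t) * ∏ j ∈ range N, (1 - (ee1 * t) ^ 2 / ((j:ℂ) + 1) ^ 2)) *
        (π * (ee3 * t) * ∏ j ∈ range N, (1 - (ee3 * t) ^ 2 / ((j:ℂ) + 1) ^ 2))
      = c0 * ∏ j ∈ range N, ((1 : ℂ) - (t : ℂ) ^ 8 / ((j : ℂ) + 1) ^ 8) := by
    intro N
    rw [show c0 * ∏ j ∈ range N, ((1 : ℂ) - (t : ℂ) ^ 8 / ((j : ℂ) + 1) ^ 8)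
        = ((π * (t:ℂ)) * (π * (Complex.I * t)) * (π * (ee1 * t)) * (π * (ee3 * t))) *
          ∏ j ∈ range N, ((1 : ℂ) - (t : ℂ) ^ 8 / ((j : ℂ) + 1) ^ 8) from ?_]
    · rw [show ∏ j ∈ range N, ((1 : ℂ) - (t : ℂ) ^ 8 / ((j : ℂ) + 1) ^ 8)
          = ∏ j ∈ range N, ((1 - (t:ℂ) ^ 2 / ((j:ℂ) + 1) ^ 2) *
              (1 - (Complex.I * t) ^ 2 / ((j:ℂ) + 1) ^ 2) *
              (1 - (ee1 * t) ^ 2 / ((j:ℂ) + 1) ^ 2) *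
              (1 - (ee3 * t) ^ 2 / ((j:ℂ) + 1) ^ 2)) from ?_]
      · rw [Finset.prod_mul_distrib, Finset.prod_mul_distrib, Finset.prod_mul_distrib]
        ring
      · refine Finset.prod_congr rfl fun j _ => ?_
        have hj : ((j : ℂ) + 1) ≠ 0 := by
          intro h
          have : ((j : ℂ) + 1) = ((j + 1 : ℕ) : ℂ) := by push_cast; ring
          rw [this] at h
          exact_mod_cast h
        have hdiv : (t:ℂ)^8/((j:ℂ)+1)^8 = ((t:ℂ)^2/((j:ℂ)+1)^2)^4 := by
          rw [div_pow, ← pow_mul, ← pow_mul]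
        rw [mul_pow, mul_pow, mul_pow, ee1_sq, ee3_sq, mul_div_assoc, mul_div_assoc,
          mul_div_assoc, hdiv]
        exact (quad _).symm
    · -- constant identity
      rw [hc0_def]
      rw [show (π * (t:ℂ)) * (π * (Complex.I * t)) * (π * (ee1 * t)) * (π * (ee3 * t))
          = (π:ℂ)^4 * (t:ℂ)^4 * (Complex.I * (ee1 * ee3)) by ring]
      have : Complex.I * (ee1 * ee3) = -Complex.I := by
        rw [ee1, ee3]
        rw [div_mul_div_comm, ← sq, hq2]
        have h5 : (1 + Complex.I) * (-1 + Complex.I) = -2 := by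
          linear_combination Complex.I_sq
        rw [h5]
        ring
      rw [this]
      ring
  have hmul2 : Tendsto
      (fun N => c0 * ∏ j ∈ range N, ((1 : ℂ) - (t : ℂ) ^ 8 / ((j : ℂ) + 1) ^ 8)) atTop
      (𝓝 (sinprod t)) := by
    rw [sinprod]
    exact Tendsto.congr (fun N => key N) hmul
  have := hmul2.const_mul c0⁻¹
  simp only [← mul_assoc, inv_mul_cancel₀ hc0, one_mul] at this
  exact this

noncomputable def bb1 : ℂ := (1 - Complex.I) + qC
noncomputable def bb2 : ℂ := (1 - Complex.I) - qC
noncomputable def bb3 : ℂ := (1 - Complex.I) + qC * Complex.I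
noncomputable def bb4 : ℂ := (1 - Complex.I) - qC * Complex.I
noncomputable def bb5 : ℂ := (1 + Complex.I) + qC
noncomputable def bb6 : ℂ := (1 + Complex.I) - qC
noncomputable def bb7 : ℂ := (1 + Complex.I) + qC * Complex.I
noncomputable def bb8 : ℂ := (1 + Complex.I) - qC * Complex.I

lemma sinprod_eq (t : ℝ) :
    sinprod t =
      (Complex.cos (bb1 * (π * t)) + Complex.cos (bb2 * (π * t))
        - Complex.cos (bb3 * (π * t)) - Complex.cos (bb4 * (π * t))
        - Complex.cos (bb5 * (π * t)) - Complex.cos (bb6 * (π * t))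
        + Complex.cos (bb7 * (π * t)) + Complex.cos (bb8 * (π * t))) / 8 := by
  have sinsin : ∀ A B : ℂ, Complex.sin A * Complex.sin B
      = (Complex.cos (A - B) - Complex.cos (A + B)) / 2 := fun A B => by
    rw [Complex.cos_sub, Complex.cos_add]; ring
  have coscos : ∀ A B : ℂ, Complex.cos A * Complex.cos B
      = (Complex.cos (A + B) + Complex.cos (A - B)) / 2 := fun A B => by
    rw [Complex.cos_sub, Complex.cos_add]; ring
  rw [sinprod]
  rw [show Complex.sin (π * (t:ℂ)) * Complex.sin (π * (Complex.I * t)) *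
      Complex.sin (π * (ee1 * t)) * Complex.sin (π * (ee3 * t))
      = (Complex.sin (π * (t:ℂ)) * Complex.sin (π * (Complex.I * t))) *
        (Complex.sin (π * (ee1 * t)) * Complex.sin (π * (ee3 * t))) from by ring]
  rw [sinsin (π * (t:ℂ)) (π * (Complex.I * t)), sinsin (π * (ee1 * (t:ℂ))) (π * (ee3 * t))]
  have e1 : (π:ℂ) * t - π * (Complex.I * t) = (1 - Complex.I) * (π * t) := by ring
  have e2 : (π:ℂ) * t + π * (Complex.I * t) = (1 + Complex.I) * (π * t) := by ring
  have h2 : (2:ℂ) / qC = qC := by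
    rw [div_eq_iff hq0, ← pow_two, hq2]
  have e3 : (π:ℂ) * (ee1 * t) - π * (ee3 * t) = qC * (π * t) := by
    rw [ee1, ee3]
    calc (π:ℂ) * ((1 + Complex.I) / qC * t) - π * ((-1 + Complex.I) / qC * t)
        = (2 / qC) * (π * t) := by ring
      _ = qC * (π * t) := by rw [h2]
  have e4 : (π:ℂ) * (ee1 * t) + π * (ee3 * t) = (qC * Complex.I) * (π * t) := by
    rw [ee1, ee3]
    calc (π:ℂ) * ((1 + Complex.I) / qC * t) + π * ((-1 + Complex.I) / qC * t)
        = (2 / qC) * (Complex.I * (π * t)) := by ring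
      _ = (qC * Complex.I) * (π * t) := by rw [h2]; ring
  rw [e1, e2, e3, e4]
  rw [show bb1 * ((π:ℂ) * t) = (1 - Complex.I) * ((π:ℂ)*t) + qC * ((π:ℂ)*t) from by rw [bb1]; ring,
    show bb2 * ((π:ℂ) * t) = (1 - Complex.I) * ((π:ℂ)*t) - qC * ((π:ℂ)*t) from by rw [bb2]; ring,
    show bb3 * ((π:ℂ) * t) = (1 - Complex.I) * ((π:ℂ)*t) + (qC * Complex.I) * ((π:ℂ)*t) from by rw [bb3]; ring,
    show bb4 * ((π:ℂ) * t) = (1 - Complex.I) * ((π:ℂ)*t) - (qC * Complex.I) * ((π:ℂ)*t) from by rw [bb4]; ring,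
    show bb5 * ((π:ℂ) * t) = (1 + Complex.I) * ((π:ℂ)*t) + qC * ((π:ℂ)*t) from by rw [bb5]; ring,
    show bb6 * ((π:ℂ) * t) = (1 + Complex.I) * ((π:ℂ)*t) - qC * ((π:ℂ)*t) from by rw [bb6]; ring,
    show bb7 * ((π:ℂ) * t) = (1 + Complex.I) * ((π:ℂ)*t) + (qC * Complex.I) * ((π:ℂ)*t) from by rw [bb7]; ring,
    show bb8 * ((π:ℂ) * t) = (1 + Complex.I) * ((π:ℂ)*t) - (qC * Complex.I) * ((π:ℂ)*t) from by rw [bb8]; ring]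
  linear_combination (1/4) * coscos ((1 - Complex.I) * ((π:ℂ)*t)) (qC * ((π:ℂ)*t))
    - (1/4) * coscos ((1 - Complex.I) * ((π:ℂ)*t)) ((qC * Complex.I) * ((π:ℂ)*t))
    - (1/4) * coscos ((1 + Complex.I) * ((π:ℂ)*t)) (qC * ((π:ℂ)*t))
    + (1/4) * coscos ((1 + Complex.I) * ((π:ℂ)*t)) ((qC * Complex.I) * ((π:ℂ)*t))

noncomputable def Bco (m : ℕ) : ℂ :=
  bb1^(2*m) + bb2^(2*m) - bb3^(2*m) - bb4^(2*m) - bb5^(2*m) - bb6^(2*m) + bb7^(2*m) + bb8^(2*m)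

noncomputable def Cc (m : ℕ) : ℂ := ((-1)^m * (π:ℂ)^(2*m) / ((2*m).factorial : ℂ)) * Bco m / 8

lemma hasSum_sinprod (t : ℝ) : HasSum (fun m => Cc m * ((t:ℂ))^(2*m)) (sinprod t) := by
  have h1 := Complex.hasSum_cos (bb1 * (π * t))
  have h2 := Complex.hasSum_cos (bb2 * (π * t))
  have h3 := Complex.hasSum_cos (bb3 * (π * t))
  have h4 := Complex.hasSum_cos (bb4 * (π * t))
  have h5 := Complex.hasSum_cos (bb5 * (π * t))
  have h6 := Complex.hasSum_cos (bb6 * (π * t))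
  have h7 := Complex.hasSum_cos (bb7 * (π * t))
  have h8 := Complex.hasSum_cos (bb8 * (π * t))
  have H := (((((((h1.add h2).sub h3).sub h4).sub h5).sub h6).add h7).add h8).div_const 8
  rw [← sinprod_eq t] at H
  have hfun : (fun m : ℕ =>
      ((-1)^m * (bb1*(π*(t:ℂ)))^(2*m)/((2*m).factorial : ℂ) + (-1)^m * (bb2*(π*(t:ℂ)))^(2*m)/((2*m).factorial : ℂ)
        - (-1)^m * (bb3*(π*(t:ℂ)))^(2*m)/((2*m).factorial : ℂ) - (-1)^m * (bb4*(π*(t:ℂ)))^(2*m)/((2*m).factorial : ℂ)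
        - (-1)^m * (bb5*(π*(t:ℂ)))^(2*m)/((2*m).factorial : ℂ) - (-1)^m * (bb6*(π*(t:ℂ)))^(2*m)/((2*m).factorial : ℂ)
        + (-1)^m * (bb7*(π*(t:ℂ)))^(2*m)/((2*m).factorial : ℂ) + (-1)^m * (bb8*(π*(t:ℂ)))^(2*m)/((2*m).factorial : ℂ)) / 8)
      = fun m => Cc m * ((t:ℂ))^(2*m) := by
    funext m
    simp only [Cc, Bco, mul_pow]
    ring
  exact hfun ▸ H

lemma pow_8n4 {b c u : ℂ} (h : b^2 = c * u) (n : ℕ) :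
    b^(8*n+4) = c^(4*n+2) * (u^2)^(2*n+1) := by
  have h1 : b^(8*n+4) = (b^2)^(4*n+2) := by
    rw [← pow_mul]
    congr 1
    omega
  have h2 : u^(4*n+2) = (u^2)^(2*n+1) := by
    rw [← pow_mul]
    congr 1
    omega
  rw [h1, h, mul_pow, h2]

lemma bb1_sq : bb1^2 = (2 + 2*qC) * (1 - Complex.I) := by
  rw [bb1]; linear_combination hq2 + Complex.I_sq
lemma bb2_sq : bb2^2 = (2 - 2*qC) * (1 - Complex.I) := by
  rw [bb2]; linear_combination hq2 + Complex.I_sq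
lemma bb3_sq : bb3^2 = (2*qC - 2) * (1 + Complex.I) := by
  rw [bb3]; linear_combination (-1) * hq2 + (qC^2 - 2*qC + 1) * Complex.I_sq
lemma bb4_sq : bb4^2 = (-(2 + 2*qC)) * (1 + Complex.I) := by
  rw [bb4]; linear_combination (-1) * hq2 + (qC^2 + 2*qC + 1) * Complex.I_sq
lemma bb5_sq : bb5^2 = (2 + 2*qC) * (1 + Complex.I) := by
  rw [bb5]; linear_combination hq2 + Complex.I_sq
lemma bb6_sq : bb6^2 = (2 - 2*qC) * (1 + Complex.I) := by
  rw [bb6]; linear_combination hq2 + Complex.I_sq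
lemma bb7_sq : bb7^2 = (2 + 2*qC) * (-1 + Complex.I) := by
  rw [bb7]; linear_combination (-1) * hq2 + (qC^2 + 2*qC + 1) * Complex.I_sq
lemma bb8_sq : bb8^2 = (2*qC - 2) * (1 - Complex.I) := by
  rw [bb8]; linear_combination (-1) * hq2 + (qC^2 - 2*qC + 1) * Complex.I_sq

lemma one_sub_I_sq : (1 - Complex.I)^2 = -(2*Complex.I) := by
  linear_combination Complex.I_sq
lemma one_add_I_sq : (1 + Complex.I)^2 = 2*Complex.I := by
  linear_combination Complex.I_sq
lemma neg_one_add_I_sq : (-1 + Complex.I)^2 = -(2*Complex.I) := by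
  linear_combination Complex.I_sq

lemma Bco_val (n : ℕ) :
    Bco (4*n+2) = -4 * (2*Complex.I)^(2*n+1) *
      ((2 + 2*qC)^(4*n+2) + (2 - 2*qC)^(4*n+2)) := by
  have he : 2 * (4*n+2) = 8*n+4 := by omega
  rw [Bco, he]
  rw [pow_8n4 bb1_sq n, pow_8n4 bb2_sq n, pow_8n4 bb3_sq n, pow_8n4 bb4_sq n,
    pow_8n4 bb5_sq n, pow_8n4 bb6_sq n, pow_8n4 bb7_sq n, pow_8n4 bb8_sq n,
    one_sub_I_sq, one_add_I_sq, neg_one_add_I_sq]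
  have hodd : Odd (2*n+1) := ⟨n, by ring⟩
  have heven : Even (4*n+2) := ⟨2*n+1, by ring⟩
  rw [hodd.neg_pow, show (2*qC - 2 : ℂ) = -(2 - 2*qC) by ring, heven.neg_pow,
    show (-(2 + 2*qC) : ℂ) = -(2 + 2*qC) by ring, heven.neg_pow]
  ring

noncomputable def fseq : ℕ → ℂ := fun j =>
  if j % 8 = 4 then (-1)^(j/8) * (-Complex.I) * (π:ℂ)^4 * ((esum (j/8) : ℝ) : ℂ) else 0

noncomputable def gseq : ℕ → ℂ := fun j => if j % 2 = 0 then Cc (j/2) else 0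

lemma hasSum_gseq (t : ℝ) : HasSum (fun j => gseq j * (t:ℂ)^j) (sinprod t) := by
  have hinj : Function.Injective (fun m : ℕ => 2*m) := fun a b h => by
    have : 2*a = 2*b := h
    omega
  rw [← Function.Injective.hasSum_iff hinj ?_]
  · have hfun : ((fun j => gseq j * (t:ℂ)^j) ∘ (fun m => 2*m))
        = fun m => Cc m * (t:ℂ)^(2*m) := by
      funext m
      simp only [Function.comp, gseq]
      rw [if_pos (by omega : (2*m) % 2 = 0), show (2*m)/2 = m from by omega]
    rw [hfun]
    exact hasSum_sinprod t
  · intro j hj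
    have hj2 : ¬ (j % 2 = 0) := by
      intro h
      exact hj ⟨j/2, by show 2*(j/2) = j; omega⟩
    simp [gseq, hj2]

lemma hasSum_fseq (t : ℝ) (ht : 0 < t) (ht2 : t < 1/2) :
    HasSum (fun j => fseq j * (t:ℂ)^j) (sinprod t) := by
  have ht1 : t ≤ 1 := by linarith
  have hx : |(-(t^8))| ≤ 1 := by
    rw [abs_neg, abs_of_nonneg (by positivity)]
    exact pow_le_one₀ ht.le ht1
  set x : ℝ := -(t^8) with hx_def
  have hR := hasSum_T x hx
  set V : ℝ := ∑' s : Finset ℕ, x ^ s.card * ∏ k ∈ s, zb k with hV_def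
  have h1 : Tendsto (fun N => ∏ k ∈ range N, (1 + x * zb k)) atTop
      (𝓝 (∑' n : ℕ, x^n * esum n)) := tendsto_prod_esum x hx
  rw [hR.tsum_eq] at h1
  have hcast : ∀ N, ((∏ k ∈ range N, (1 + x * zb k) : ℝ) : ℂ)
      = ∏ j ∈ range N, ((1:ℂ) - (t:ℂ)^8/((j:ℂ)+1)^8) := by
    intro N
    push_cast
    refine Finset.prod_congr rfl fun k _ => ?_
    rw [zb]
    have hk : ((k:ℝ)+1) ≠ 0 := by positivity
    push_cast
    rw [hx_def]
    push_cast
    rw [div_eq_mul_inv]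
    ring
  have h2 : Tendsto (fun N => ∏ j ∈ range N, ((1:ℂ) - (t:ℂ)^8/((j:ℂ)+1)^8)) atTop
      (𝓝 ((V : ℝ) : ℂ)) := by
    have := (Complex.continuous_ofReal.tendsto _).comp h1
    exact Tendsto.congr (fun N => hcast N) this
  have h3 := euler_combined t ht
  set c0 : ℂ := (-Complex.I) * (π : ℂ) ^ 4 * (t : ℂ) ^ 4 with hc0_def
  have hc0 : c0 ≠ 0 := by
    apply mul_ne_zero (mul_ne_zero _ _)
    · exact pow_ne_zero _ (by exact_mod_cast ht.ne')
    · simp [Complex.I_ne_zero]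
    · exact pow_ne_zero _ (by exact_mod_cast Real.pi_ne_zero)
  have hU : ((V : ℝ) : ℂ) = c0⁻¹ * sinprod t := tendsto_nhds_unique h2 h3
  have hsp : sinprod t = c0 * ((V : ℝ) : ℂ) := by
    rw [hU, ← mul_assoc, mul_inv_cancel₀ hc0, one_mul]
  have h5 : HasSum (fun n : ℕ => c0 * ((x^n * esum n : ℝ) : ℂ)) (sinprod t) := by
    rw [hsp]
    exact ((RCLike.hasSum_ofReal (𝕜 := ℂ)).2 hR).mul_left c0
  have hinj : Function.Injective (fun n : ℕ => 8*n+4) := fun a b h => by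
    have : 8*a+4 = 8*b+4 := h
    omega
  rw [← Function.Injective.hasSum_iff hinj ?_]
  · have hfun : ((fun j => fseq j * (t:ℂ)^j) ∘ (fun n => 8*n+4))
        = fun n : ℕ => c0 * ((x^n * esum n : ℝ) : ℂ) := by
      funext n
      simp only [Function.comp, fseq]
      rw [if_pos (by omega : (8*n+4) % 8 = 4), show (8*n+4)/8 = n from by omega]
      rw [hx_def, hc0_def]
      push_cast
      ring
    rw [hfun]
    exact h5
  · intro j hj
    have hj8 : ¬ (j % 8 = 4) := by
      intro h
      exact hj ⟨j/8, by show 8*(j/8)+4 = j; omega⟩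
    simp [fseq, hj8]

lemma sqrt_two_le_two : Real.sqrt 2 ≤ 2 := by
  have h := Real.sqrt_le_sqrt (by norm_num : (2:ℝ) ≤ 4)
  have h4 : Real.sqrt 4 = 2 := by
    rw [show (4:ℝ) = 2^2 by norm_num, Real.sqrt_sq (by norm_num : (0:ℝ) ≤ 2)]
  rwa [h4] at h

lemma norm_qC : ‖qC‖ = Real.sqrt 2 := by
  rw [qC, Complex.norm_real, Real.norm_eq_abs, abs_of_nonneg (Real.sqrt_nonneg 2)]

lemma norm_bb_le : ‖bb1‖ ≤ 4 ∧ ‖bb2‖ ≤ 4 ∧ ‖bb3‖ ≤ 4 ∧ ‖bb4‖ ≤ 4 ∧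
    ‖bb5‖ ≤ 4 ∧ ‖bb6‖ ≤ 4 ∧ ‖bb7‖ ≤ 4 ∧ ‖bb8‖ ≤ 4 := by
  have h1 : ‖(1 - Complex.I)‖ ≤ 2 := by
    calc ‖(1 - Complex.I)‖ ≤ ‖(1:ℂ)‖ + ‖Complex.I‖ := norm_sub_le _ _
      _ ≤ 2 := by rw [norm_one, Complex.norm_I]; norm_num
  have h2 : ‖(1 + Complex.I)‖ ≤ 2 := by
    calc ‖(1 + Complex.I)‖ ≤ ‖(1:ℂ)‖ + ‖Complex.I‖ := norm_add_le _ _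
      _ ≤ 2 := by rw [norm_one, Complex.norm_I]; norm_num
  have h3 : ‖qC‖ ≤ 2 := by rw [norm_qC]; exact sqrt_two_le_two
  have h4 : ‖qC * Complex.I‖ ≤ 2 := by
    rw [norm_mul, Complex.norm_I, mul_one]; exact h3
  refine ⟨?_, ?_, ?_, ?_, ?_, ?_, ?_, ?_⟩ <;>
    first
    | (rw [bb1]; exact le_trans (norm_add_le _ _) (by linarith))
    | (rw [bb2]; exact le_trans (norm_sub_le _ _) (by linarith))
    | (rw [bb3]; exact le_trans (norm_add_le _ _) (by linarith))
    | (rw [bb4]; exact le_trans (norm_sub_le _ _) (by linarith))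
    | (rw [bb5]; exact le_trans (norm_add_le _ _) (by linarith))
    | (rw [bb6]; exact le_trans (norm_sub_le _ _) (by linarith))
    | (rw [bb7]; exact le_trans (norm_add_le _ _) (by linarith))
    | (rw [bb8]; exact le_trans (norm_sub_le _ _) (by linarith))

lemma norm_Bco_le (m : ℕ) : ‖Bco m‖ ≤ 8 * 4^(2*m) := by
  obtain ⟨u1, u2, u3, u4, u5, u6, u7, u8⟩ := norm_bb_le
  have hb : ∀ (b : ℂ), ‖b‖ ≤ 4 → ‖b^(2*m)‖ ≤ 4^(2*m) := fun b hbb => by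
    rw [norm_pow]
    exact pow_le_pow_left₀ (norm_nonneg _) hbb _
  rw [Bco]
  calc ‖bb1^(2*m) + bb2^(2*m) - bb3^(2*m) - bb4^(2*m) - bb5^(2*m) - bb6^(2*m)
      + bb7^(2*m) + bb8^(2*m)‖
      ≤ ‖bb1^(2*m) + bb2^(2*m) - bb3^(2*m) - bb4^(2*m) - bb5^(2*m) - bb6^(2*m)
      + bb7^(2*m)‖ + ‖bb8^(2*m)‖ := norm_add_le _ _
    _ ≤ (‖bb1^(2*m) + bb2^(2*m) - bb3^(2*m) - bb4^(2*m) - bb5^(2*m) - bb6^(2*m)‖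
        + ‖bb7^(2*m)‖) + ‖bb8^(2*m)‖ := by gcongr; exact norm_add_le _ _
    _ ≤ ((‖bb1^(2*m) + bb2^(2*m) - bb3^(2*m) - bb4^(2*m) - bb5^(2*m)‖
        + ‖bb6^(2*m)‖) + ‖bb7^(2*m)‖) + ‖bb8^(2*m)‖ := by gcongr; exact norm_sub_le _ _
    _ ≤ (((‖bb1^(2*m) + bb2^(2*m) - bb3^(2*m) - bb4^(2*m)‖
        + ‖bb5^(2*m)‖) + ‖bb6^(2*m)‖) + ‖bb7^(2*m)‖) + ‖bb8^(2*m)‖ := by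
          gcongr; exact norm_sub_le _ _
    _ ≤ ((((‖bb1^(2*m) + bb2^(2*m) - bb3^(2*m)‖ + ‖bb4^(2*m)‖)
        + ‖bb5^(2*m)‖) + ‖bb6^(2*m)‖) + ‖bb7^(2*m)‖) + ‖bb8^(2*m)‖ := by
          gcongr; exact norm_sub_le _ _
    _ ≤ (((((‖bb1^(2*m) + bb2^(2*m)‖ + ‖bb3^(2*m)‖) + ‖bb4^(2*m)‖)
        + ‖bb5^(2*m)‖) + ‖bb6^(2*m)‖) + ‖bb7^(2*m)‖) + ‖bb8^(2*m)‖ := by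
          gcongr; exact norm_sub_le _ _
    _ ≤ ((((((‖bb1^(2*m)‖ + ‖bb2^(2*m)‖) + ‖bb3^(2*m)‖) + ‖bb4^(2*m)‖)
        + ‖bb5^(2*m)‖) + ‖bb6^(2*m)‖) + ‖bb7^(2*m)‖) + ‖bb8^(2*m)‖ := by
          gcongr; exact norm_add_le _ _
    _ ≤ 8 * 4^(2*m) := by
        have := hb bb1 u1; have := hb bb2 u2; have := hb bb3 u3; have := hb bb4 u4
        have := hb bb5 u5; have := hb bb6 u6; have := hb bb7 u7; have := hb bb8 u8
        linarith

lemma summable_fseq : Summable (fun j => ‖fseq j‖ * (1/2:ℝ)^j) := by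
  set E := ∑' s : Finset ℕ, ∏ k ∈ s, zb k with hE_def
  have hE0 : 0 ≤ E := tsum_nonneg fun s => Finset.prod_nonneg fun k _ => zb_nonneg k
  apply Summable.of_nonneg_of_le (fun j => by positivity) (fun j => ?_)
    (summable_geometric_two.mul_left (π^4 * E))
  apply mul_le_mul_of_nonneg_right _ (by positivity)
  rw [fseq]
  split_ifs with h
  · rw [norm_mul, norm_mul, norm_mul, norm_pow, norm_neg, norm_one, one_pow, one_mul,
      norm_neg, Complex.norm_I, one_mul, norm_pow, Complex.norm_real, Real.norm_eq_abs,
      abs_of_pos Real.pi_pos, Complex.norm_real, Real.norm_eq_abs,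
      abs_of_nonneg (esum_nonneg _)]
    have := esum_le (j/8)
    rw [← hE_def] at this
    exact mul_le_mul_of_nonneg_left this (by positivity)
  · rw [norm_zero]
    exact mul_nonneg (by positivity) hE0

lemma summable_gseq : Summable (fun j => ‖gseq j‖ * (1/2:ℝ)^j) := by
  have hinj : Function.Injective (fun m : ℕ => 2*m) := fun a b h => by
    have : 2*a = 2*b := h
    omega
  rw [← Function.Injective.summable_iff hinj ?_]
  · apply Summable.of_nonneg_of_le
      (fun m => mul_nonneg (norm_nonneg _) (pow_nonneg (by norm_num) _)) (fun m => ?_)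
      ((Real.summable_pow_div_factorial (2*π)).comp_injective hinj)
    simp only [Function.comp, gseq]
    rw [if_pos (by omega : (2*m) % 2 = 0), show (2*m)/2 = m from by omega]
    rw [Cc]
    have h1 : ‖((-1:ℂ))^m * (π:ℂ)^(2*m) / ((2*m).factorial : ℂ) * Bco m / 8‖
        = π^(2*m) * ‖Bco m‖ / ((2*m).factorial : ℝ) / 8 := by
      rw [norm_div, norm_mul, norm_div, norm_mul, norm_pow, norm_neg, norm_one, one_pow,
        one_mul, norm_pow, Complex.norm_real, Real.norm_eq_abs, abs_of_pos Real.pi_pos,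
        Complex.norm_natCast]
      norm_num
      ring
    rw [h1]
    have h2 : π^(2*m) * ‖Bco m‖ / ((2*m).factorial : ℝ) / 8 * (1/2)^(2*m)
        ≤ π^(2*m) * (8 * 4^(2*m)) / ((2*m).factorial : ℝ) / 8 * (1/2)^(2*m) := by
      gcongr
      exact norm_Bco_le m
    refine h2.trans (le_of_eq ?_)
    have h3 : (2*π)^(2*m) = π^(2*m) * 4^(2*m) * (1/2:ℝ)^(2*m) := by
      rw [← mul_pow, ← mul_pow]
      congr 1
      ring
    rw [h3]
    ring
  · intro j hj
    have hj2 : ¬ (j % 2 = 0) := by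
      intro h
      exact hj ⟨j/2, by show 2*(j/2) = j; omega⟩
    simp [gseq, hj2]

lemma fg_eq : ∀ j, fseq j = gseq j := by
  apply coeff_unique (δ := (1/2:ℝ)) (by norm_num) summable_fseq summable_gseq
  intro t ht htδ
  rw [(hasSum_fseq t ht htδ).tsum_eq, (hasSum_gseq t).tsum_eq]

lemma esum_val (n : ℕ) :
    ((esum n : ℝ) : ℂ) = (π:ℂ)^(8*n) * 2^(2*n) *
      ((2 + 2*qC)^(4*n+2) + (2 - 2*qC)^(4*n+2)) / (((8*n+4).factorial : ℕ) : ℂ) := by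
  have h := fg_eq (8*n+4)
  rw [fseq, gseq] at h
  rw [if_pos (by omega : (8*n+4) % 8 = 4), show (8*n+4)/8 = n from by omega,
    if_pos (by omega : (8*n+4) % 2 = 0), show (8*n+4)/2 = 4*n+2 from by omega] at h
  rw [Cc, Bco_val] at h
  have he1 : 2*(4*n+2) = 8*n+4 := by omega
  rw [he1] at h
  have he2 : ((-1:ℂ))^(4*n+2) = 1 := Even.neg_one_pow ⟨2*n+1, by ring⟩
  rw [he2, one_mul] at h
  have he3 : (2*Complex.I)^(2*n+1) = 2^(2*n+1) * ((-1:ℂ))^n * Complex.I := by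
    have hI : Complex.I^(2*n+1) = ((-1:ℂ))^n * Complex.I := by
      rw [pow_succ, pow_mul, Complex.I_sq]
    rw [mul_pow, hI]
    ring
  rw [he3] at h
  have hc : ((-1:ℂ))^n * (-Complex.I) * (π:ℂ)^4 ≠ 0 := by
    have h1 : ((-1:ℂ))^n ≠ 0 := pow_ne_zero _ (by norm_num)
    have h2 : (-Complex.I) ≠ 0 := by simp [Complex.I_ne_zero]
    have h3 : ((π:ℂ))^4 ≠ 0 := pow_ne_zero _ (Complex.ofReal_ne_zero.2 Real.pi_ne_zero)
    exact mul_ne_zero (mul_ne_zero h1 h2) h3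
  apply mul_left_cancel₀ hc
  rw [show ((-1:ℂ))^n * (-Complex.I) * (π:ℂ)^4 * ((esum n : ℝ) : ℂ)
    = (-1:ℂ)^n * (-Complex.I) * (π:ℂ)^4 * ((esum n : ℝ) : ℂ) from rfl, h]
  ring

lemma esum_real (n : ℕ) :
    esum n = π^(8*n) * 2^(2*n) *
      ((2 + 2*Real.sqrt 2)^(4*n+2) + (2 - 2*Real.sqrt 2)^(4*n+2))
        / (((8*n+4).factorial : ℕ) : ℝ) := by
  rw [← Complex.ofReal_inj]
  rw [esum_val n, qC]
  push_cast
  ring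

theorem zeta_eight_rep_aux (n : ℕ) (hn : 1 ≤ n) :
    mzv (fun _ : Fin n => (8 : ℝ)) =
      2 ^ (4 * n + 1) * π ^ (8 * n) / (Nat.factorial (8 * n + 4)) *
        ((2 * Real.cos (π / 8)) ^ (8 * n + 4) + (2 * Real.sin (π / 8)) ^ (8 * n + 4)) := by
  rw [mzv_eq_esum, esum_real n]
  have hq : Real.sqrt 2 ^ 2 = 2 := Real.sq_sqrt (by norm_num)
  have hc2 : (2*Real.cos (π/8))^2 = 2 + Real.sqrt 2 := by
    have h := Real.cos_sq (π/8)
    rw [show 2*(π/8) = π/4 by ring, Real.cos_pi_div_four] at h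
    rw [mul_pow, h]
    ring
  have hs2 : (2*Real.sin (π/8))^2 = 2 - Real.sqrt 2 := by
    have hpy := Real.sin_sq_add_cos_sq (π/8)
    nlinarith [hc2]
  have hcp : (2*Real.cos (π/8))^(8*n+4) = (2+Real.sqrt 2)^(4*n+2) := by
    rw [← hc2, ← pow_mul]
    congr 1
    omega
  have hsp : (2*Real.sin (π/8))^(8*n+4) = (2-Real.sqrt 2)^(4*n+2) := by
    rw [← hs2, ← pow_mul]
    congr 1
    omega
  rw [hcp, hsp]
  have k1 : (2+2*Real.sqrt 2)^(4*n+2) = 2^(2*n+1) * (2+Real.sqrt 2)^(4*n+2) := by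
    have hb : (2+2*Real.sqrt 2)^2 = 2*(2+Real.sqrt 2)^2 := by nlinarith [hq]
    calc (2+2*Real.sqrt 2)^(4*n+2) = ((2+2*Real.sqrt 2)^2)^(2*n+1) := by
          rw [← pow_mul]; congr 1; omega
      _ = (2*(2+Real.sqrt 2)^2)^(2*n+1) := by rw [hb]
      _ = 2^(2*n+1) * ((2+Real.sqrt 2)^2)^(2*n+1) := by rw [mul_pow]
      _ = 2^(2*n+1) * (2+Real.sqrt 2)^(4*n+2) := by
          rw [← pow_mul, show 2*(2*n+1) = 4*n+2 from by omega]
  have k2 : (2-2*Real.sqrt 2)^(4*n+2) = 2^(2*n+1) * (2-Real.sqrt 2)^(4*n+2) := by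
    have hb : (2-2*Real.sqrt 2)^2 = 2*(2-Real.sqrt 2)^2 := by nlinarith [hq]
    calc (2-2*Real.sqrt 2)^(4*n+2) = ((2-2*Real.sqrt 2)^2)^(2*n+1) := by
          rw [← pow_mul]; congr 1; omega
      _ = (2*(2-Real.sqrt 2)^2)^(2*n+1) := by rw [hb]
      _ = 2^(2*n+1) * ((2-Real.sqrt 2)^2)^(2*n+1) := by rw [mul_pow]
      _ = 2^(2*n+1) * (2-Real.sqrt 2)^(4*n+2) := by
          rw [← pow_mul, show 2*(2*n+1) = 4*n+2 from by omega]
  rw [k1, k2]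
  ring

/-- `ζ({8}^n) = (2^{4n+1} π^{8n}/(8n+4)!) ((2cos(π/8))^{8n+4} + (2sin(π/8))^{8n+4})`. -/
theorem zeta_eight_rep (n : ℕ) (hn : 1 ≤ n) :
    mzv (fun _ : Fin n => (8 : ℝ)) =
      2 ^ (4 * n + 1) * π ^ (8 * n) / (Nat.factorial (8 * n + 4)) *
        ((2 * Real.cos (π / 8)) ^ (8 * n + 4) + (2 * Real.sin (π / 8)) ^ (8 * n + 4)) :=
  zeta_eight_rep_aux n hn
end
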